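/- arXiv:1712.06315 — 5 statements merged into one kernel-verified Lean document; each statement's English description precedes it below -/
import Mathlib

section
/- For every b ≥ 0 and every t ≥ 0, the function s ↦ K(s,t) √b e^{-b s} is Lebesgue integrable on (0, ∞) and ∫_0^∞ K(s,t) √b e^{-b s} ds = e^{-b t} − 1. -/
open MeasureTheory Real

/-- The kernel `K(s,t)` from the paper. -/
noncomputable def K (s t : ℝ) : ℝ :=
  (1 / Real.sqrt Real.pi) * (if t < s then (s - t) ^ (-(1 / 2 : ℝ)) else 0)
    - (1 / Real.sqrt Real.pi) * (if 0 < s then s ^ (-(1 / 2 : ℝ)) else 0)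

lemma aux_int (b : ℝ) (hb : 0 < b) :
    IntegrableOn (fun s : ℝ => s ^ (-(1 / 2 : ℝ)) * Real.exp (-b * s)) (Set.Ioi 0) := by
  have h := Real.GammaIntegral_convergent (s := 1/2) (by norm_num)
  have h2 := (integrableOn_Ioi_comp_mul_left_iff
      (fun x => Real.exp (-x) * x ^ ((1/2 : ℝ) - 1)) 0 hb).mpr (by simpa using h)
  refine IntegrableOn.congr_fun (h2.const_mul (b ^ ((1:ℝ)/2)))
    (fun x hx => ?_) measurableSet_Ioi
  have hx0 : (0:ℝ) < x := hx
  rw [Real.mul_rpow hb.le hx0.le]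
  rw [show ((1:ℝ)/2) - 1 = -(1/2) by norm_num, Real.rpow_neg hb.le, neg_mul]
  have hbp : (b:ℝ) ^ (((1:ℝ))/2) ≠ 0 := by positivity
  field_simp

lemma aux_val (b : ℝ) (hb : 0 < b) :
    ∫ s in Set.Ioi (0:ℝ), s ^ (-(1 / 2 : ℝ)) * Real.exp (-b * s)
      = Real.sqrt Real.pi / Real.sqrt b := by
  have h := Real.integral_rpow_mul_exp_neg_mul_Ioi (a := 1/2) (r := b) (by norm_num) hb
  rw [show ((1:ℝ)/2) - 1 = -(1/2) by norm_num] at h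
  simp only [neg_mul] at h ⊢
  rw [h, Real.Gamma_one_half_eq, ← Real.sqrt_eq_rpow, one_div, Real.sqrt_inv]
  field_simp

/-- For `b ≥ 0` and `t ≥ 0`, the function `s ↦ K(s,t) √b e^{-b s}` is Lebesgue integrable on
`(0, ∞)` and `∫_0^∞ K(s,t) √b e^{-b s} ds = e^{-b t} − 1`. -/
theorem stmt_1 (b t : ℝ) (hb : 0 ≤ b) (ht : 0 ≤ t) :
    IntegrableOn (fun s => K s t * Real.sqrt b * Real.exp (-b * s)) (Set.Ioi 0) ∧
      ∫ s in Set.Ioi (0 : ℝ), K s t * Real.sqrt b * Real.exp (-b * s)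
        = Real.exp (-b * t) - 1 := by
  rcases hb.eq_or_lt with rfl | hb
  · simp
  -- b > 0 case
  set g : ℝ → ℝ := fun s => (s - t) ^ (-(1 / 2 : ℝ)) * Real.exp (-b * s) with hg
  have hmp : MeasurePreserving (fun u : ℝ => u + t) volume volume :=
    measurePreserving_add_right volume t
  have hemb : MeasurableEmbedding (fun u : ℝ => u + t) :=
    (MeasurableEquiv.addRight t).measurableEmbedding
  have hpre : (fun u : ℝ => u + t) ⁻¹' Set.Ioi t = Set.Ioi 0 := by
    ext u; simp
  have hcomp : Set.EqOn (fun u : ℝ => g (u + t))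
      (fun u : ℝ => Real.exp (-b * t) * (u ^ (-(1 / 2 : ℝ)) * Real.exp (-b * u)))
      (Set.Ioi 0) := by
    intro u _
    simp only [hg, add_sub_cancel_right]
    rw [show -b * (u + t) = -b*u + -b*t by ring, Real.exp_add]
    ring
  -- integrability of g on Ioi t
  have haux : IntegrableOn (fun u : ℝ => g (u + t)) (Set.Ioi 0) :=
    IntegrableOn.congr_fun ((aux_int b hb).const_mul (Real.exp (-b * t)))
      (fun u hu => (hcomp hu).symm) measurableSet_Ioi
  have hg_int : IntegrableOn g (Set.Ioi t) := by
    refine (hmp.integrableOn_comp_preimage hemb).mp ?_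
    rw [hpre]
    exact haux
  have hg_val : ∫ s in Set.Ioi t, g s
      = Real.exp (-b * t) * (Real.sqrt Real.pi / Real.sqrt b) :=
    calc ∫ s in Set.Ioi t, g s = ∫ u in Set.Ioi (0:ℝ), g (u + t) := by
          rw [← hpre]; exact (hmp.setIntegral_preimage_emb hemb g _).symm
      _ = ∫ u in Set.Ioi (0:ℝ),
            Real.exp (-b * t) * (u ^ (-(1 / 2 : ℝ)) * Real.exp (-b * u)) :=
          setIntegral_congr_fun measurableSet_Ioi hcomp
      _ = Real.exp (-b * t) * (Real.sqrt Real.pi / Real.sqrt b) := by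
          rw [integral_const_mul, aux_val b hb]
  -- f1 : the first part
  set f1 : ℝ → ℝ := fun s =>
    (if t < s then (s - t) ^ (-(1 / 2 : ℝ)) else 0) * Real.exp (-b * s) with hf1def
  have hf1eq : f1 = Set.indicator (Set.Ioi t) g := by
    ext s
    by_cases h : t < s <;> simp [hf1def, hg, Set.indicator, h]
  have hIoi : Set.Ioi (0:ℝ) ∩ Set.Ioi t = Set.Ioi t := by
    ext x
    simp only [Set.mem_inter_iff, Set.mem_Ioi]
    exact ⟨fun h => h.2, fun h => ⟨lt_of_le_of_lt ht h, h⟩⟩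
  have hf1_int : IntegrableOn f1 (Set.Ioi 0) := by
    rw [hf1eq, IntegrableOn, integrable_indicator_iff measurableSet_Ioi, IntegrableOn,
      Measure.restrict_restrict measurableSet_Ioi, Set.inter_comm, hIoi]
    exact hg_int
  have hf1_val : ∫ s in Set.Ioi (0:ℝ), f1 s
      = Real.exp (-b * t) * (Real.sqrt Real.pi / Real.sqrt b) := by
    rw [hf1eq, setIntegral_indicator measurableSet_Ioi, hIoi, hg_val]
  -- f2 : the second part
  set f2 : ℝ → ℝ := fun s =>
    (if 0 < s then s ^ (-(1 / 2 : ℝ)) else 0) * Real.exp (-b * s) with hf2def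
  have hf2_int : IntegrableOn f2 (Set.Ioi 0) :=
    IntegrableOn.congr_fun (aux_int b hb)
      (fun s hs => by simp [hf2def, Set.mem_Ioi.mp hs]) measurableSet_Ioi
  have hf2_val : ∫ s in Set.Ioi (0:ℝ), f2 s = Real.sqrt Real.pi / Real.sqrt b := by
    rw [setIntegral_congr_fun measurableSet_Ioi
      (fun s hs => by simp [hf2def, Set.mem_Ioi.mp hs] : Set.EqOn f2
        (fun s : ℝ => s ^ (-(1 / 2 : ℝ)) * Real.exp (-b * s)) (Set.Ioi 0)), aux_val b hb]
  -- combine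
  have hK : ∀ s : ℝ, K s t * Real.sqrt b * Real.exp (-b * s)
      = (Real.sqrt b / Real.sqrt Real.pi) * (f1 s - f2 s) := by
    intro s
    simp only [K, hf1def, hf2def]
    ring
  have hπ : Real.sqrt Real.pi ≠ 0 := by positivity
  have hsb : Real.sqrt b ≠ 0 := by positivity
  constructor
  · exact IntegrableOn.congr_fun
      ((hf1_int.sub hf2_int).const_mul (Real.sqrt b / Real.sqrt Real.pi))
      (fun s _ => (hK s).symm) measurableSet_Ioi
  · rw [setIntegral_congr_fun measurableSet_Ioi (fun s _ => hK s), integral_const_mul,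
      integral_sub hf1_int hf2_int, hf1_val, hf2_val]
    field_simp
end

section
/- For every t ≥ 0 one has ∫_0^∞ |K(s,t)| ds = (4/√π) √t. -/
open MeasureTheory Real

lemma rpow_neg_half_of_nonpos {x : ℝ} (hx : x ≤ 0) : x ^ (-(1 / 2 : ℝ)) = 0 := by
  rcases hx.lt_or_eq with h | h
  · rw [Real.rpow_def_of_neg h]
    have : Real.cos (-(1 / 2) * Real.pi) = 0 := by
      rw [show (-(1 / 2 : ℝ)) * Real.pi = -(Real.pi / 2) by ring, Real.cos_neg,
        Real.cos_pi_div_two]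
    rw [this, mul_zero]
  · subst h; rw [Real.zero_rpow (by norm_num)]

lemma rpow_neg_half_eq_inv_sqrt {x : ℝ} (hx : 0 ≤ x) : x ^ (-(1 / 2 : ℝ)) = 1 / Real.sqrt x := by
  rw [Real.rpow_neg hx, Real.sqrt_eq_rpow]
  norm_num

/-- For every `t ≥ 0`, `∫_0^∞ |K(s,t)| ds = (4/√π) √t`. -/
theorem stmt_2 (t : ℝ) (ht : 0 ≤ t) :
    ∫ s in Set.Ioi (0 : ℝ), |K s t| = (4 / Real.sqrt Real.pi) * Real.sqrt t := by
  rcases ht.lt_or_eq with ht0 | rfl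
  swap
  · have : ∀ s : ℝ, |K s 0| = 0 := by
      intro s
      simp [K, abs_eq_zero, sub_zero]
    simp [this]
  -- now 0 < t
  set c : ℝ := 1 / Real.sqrt Real.pi with hc
  have hπ : 0 < Real.sqrt Real.pi := Real.sqrt_pos.2 Real.pi_pos
  have hcpos : 0 < c := by positivity
  -- simplify K
  have hK : ∀ s t : ℝ, K s t = c * ((s - t) ^ (-(1 / 2 : ℝ)) - s ^ (-(1 / 2 : ℝ))) := by
    intro s t
    unfold K
    rw [mul_sub]
    congr 1
    · rcases lt_or_ge t s with h | h
      · rw [if_pos h]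
      · have h0 : (s - t) ^ (-(1 / 2 : ℝ)) = 0 := rpow_neg_half_of_nonpos (by linarith)
        rw [if_neg (not_lt.2 h), h0]
    · rcases lt_or_ge 0 s with h' | h'
      · rw [if_pos h']
      · have h0 : s ^ (-(1 / 2 : ℝ)) = 0 := rpow_neg_half_of_nonpos h'
        rw [if_neg (not_lt.2 h'), h0]
  -- on Ioc 0 t : |K s t| = c * s ^ (-1/2)
  have habs1 : ∀ s ∈ Set.Ioc (0 : ℝ) t, |K s t| = c * s ^ (-(1 / 2 : ℝ)) := by
    intro s hs
    rw [hK, rpow_neg_half_of_nonpos (by linarith [hs.2]), zero_sub, mul_neg, abs_neg,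
      abs_mul, abs_of_pos hcpos, abs_of_nonneg (Real.rpow_nonneg hs.1.le _)]
  -- on Ioi t : |K s t| = c * ((s-t)^(-1/2) - s^(-1/2)), nonneg
  have hmono : ∀ s ∈ Set.Ioi t, (0:ℝ) ≤ (s - t) ^ (-(1 / 2 : ℝ)) - s ^ (-(1 / 2 : ℝ)) := by
    intro s hs
    have h1 : (0:ℝ) < s - t := by simpa [sub_pos] using hs
    have := Real.rpow_le_rpow_of_nonpos h1 (by linarith : s - t ≤ s) (by norm_num :
      -(1 / 2 : ℝ) ≤ 0)
    linarith
  have habs2 : ∀ s ∈ Set.Ioi t, |K s t|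
      = c * ((s - t) ^ (-(1 / 2 : ℝ)) - s ^ (-(1 / 2 : ℝ))) := by
    intro s hs
    rw [hK, abs_mul, abs_of_pos hcpos, abs_of_nonneg (hmono s hs)]
  -- primitive on Ioi t
  set g : ℝ → ℝ := fun s => 2 * Real.sqrt (s - t) - 2 * Real.sqrt s with hg
  set g' : ℝ → ℝ := fun s => (s - t) ^ (-(1 / 2 : ℝ)) - s ^ (-(1 / 2 : ℝ)) with hg'
  have hderiv : ∀ s ∈ Set.Ioi t, HasDerivAt g (g' s) s := by
    intro s hs
    have hst : (0:ℝ) < s - t := by simpa [sub_pos] using hs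
    have hs0 : (0:ℝ) < s := lt_trans ht0 hs
    have h1 : HasDerivAt (fun s => Real.sqrt (s - t)) (1 / (2 * Real.sqrt (s - t))) s := by
      have := (Real.hasDerivAt_sqrt (ne_of_gt hst)).comp s
        ((hasDerivAt_id s).sub_const t)
      simpa [Function.comp_def] using this
    have h2 : HasDerivAt Real.sqrt (1 / (2 * Real.sqrt s)) s := Real.hasDerivAt_sqrt hs0.ne'
    have := (h1.const_mul 2).sub (h2.const_mul 2)
    convert this using 1
    have e1 : Real.sqrt (s - t) ≠ 0 := by positivity
    have e2 : Real.sqrt s ≠ 0 := by positivity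
    show (s - t) ^ (-(1 / 2 : ℝ)) - s ^ (-(1 / 2 : ℝ)) = _
    rw [rpow_neg_half_eq_inv_sqrt hst.le, rpow_neg_half_eq_inv_sqrt hs0.le]
    field_simp
    all_goals rfl
  have hcont : ContinuousWithinAt g (Set.Ici t) t := by
    apply ContinuousAt.continuousWithinAt
    fun_prop
  have htend : Filter.Tendsto g Filter.atTop (nhds 0) := by
    have hb : Filter.Tendsto (fun s : ℝ => 2 * t / Real.sqrt s) Filter.atTop (nhds 0) := by
      apply Filter.Tendsto.div_atTop (tendsto_const_nhds)
      apply Filter.Tendsto.congr' _ (tendsto_rpow_atTop (by norm_num : (0:ℝ) < 1/2))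
      filter_upwards with s
      rw [Real.sqrt_eq_rpow]
    apply squeeze_zero_norm' _ hb
    filter_upwards [Filter.eventually_gt_atTop t] with s hs
    have hst : (0:ℝ) < s - t := by simpa [sub_pos] using hs
    have hs0 : (0:ℝ) < s := lt_trans ht0 hs
    have r1 : Real.sqrt (s - t) ^ 2 = s - t := Real.sq_sqrt hst.le
    have r2 : Real.sqrt s ^ 2 = s := Real.sq_sqrt hs0.le
    have p1 : (0:ℝ) < Real.sqrt (s - t) := Real.sqrt_pos.2 hst
    have p2 : (0:ℝ) < Real.sqrt s := Real.sqrt_pos.2 hs0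
    have hle : Real.sqrt (s - t) ≤ Real.sqrt s := Real.sqrt_le_sqrt (by linarith)
    have key : Real.sqrt s - Real.sqrt (s - t) ≤ t / Real.sqrt s := by
      rw [le_div_iff₀ p2]
      nlinarith [mul_le_mul_of_nonneg_left hle p1.le, r1, r2]
    have hgle : g s ≤ 0 := by
      show 2 * Real.sqrt (s - t) - 2 * Real.sqrt s ≤ 0
      linarith
    rw [Real.norm_eq_abs, abs_of_nonpos hgle]
    show -(2 * Real.sqrt (s - t) - 2 * Real.sqrt s) ≤ 2 * t / Real.sqrt s
    have h2 : 2 * t / Real.sqrt s = 2 * (t / Real.sqrt s) := by ring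
    linarith
  have hint2 : IntegrableOn g' (Set.Ioi t) volume :=
    integrableOn_Ioi_deriv_of_nonneg hcont hderiv hmono htend
  have hval2 : ∫ s in Set.Ioi t, g' s = 2 * Real.sqrt t := by
    rw [integral_Ioi_of_hasDerivAt_of_nonneg hcont hderiv hmono htend]
    simp [hg, Real.sqrt_eq_zero', ht0.le]
  -- integral on Ioc 0 t
  have hint1' : IntegrableOn (fun s : ℝ => s ^ (-(1 / 2 : ℝ))) (Set.Ioc 0 t) volume := by
    have := intervalIntegral.intervalIntegrable_rpow' (a := 0) (b := t)
      (r := -(1/2 : ℝ)) (by norm_num)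
    rwa [intervalIntegrable_iff_integrableOn_Ioc_of_le ht0.le] at this
  have hval1 : ∫ s in Set.Ioc 0 t, (s : ℝ) ^ (-(1 / 2 : ℝ)) = 2 * Real.sqrt t := by
    rw [← intervalIntegral.integral_of_le ht0.le,
      integral_rpow (Or.inl (by norm_num : (-1:ℝ) < -(1/2)))]
    norm_num
    rw [Real.sqrt_eq_rpow]
    ring
  -- assemble
  have hunion : Set.Ioc (0:ℝ) t ∪ Set.Ioi t = Set.Ioi 0 := Set.Ioc_union_Ioi_eq_Ioi ht0.le
  have hdisj : Disjoint (Set.Ioc (0:ℝ) t) (Set.Ioi t) := Set.Ioc_disjoint_Ioi le_rfl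
  have hi1 : IntegrableOn (fun s => |K s t|) (Set.Ioc 0 t) volume := by
    exact IntegrableOn.congr_fun (hint1'.const_mul c)
      (fun s hs => (habs1 s hs).symm) measurableSet_Ioc
  have hi2 : IntegrableOn (fun s => |K s t|) (Set.Ioi t) volume := by
    exact IntegrableOn.congr_fun (hint2.const_mul c)
      (fun s hs => (habs2 s hs).symm) measurableSet_Ioi
  rw [← hunion, setIntegral_union hdisj measurableSet_Ioi hi1 hi2]
  rw [setIntegral_congr_fun measurableSet_Ioc habs1,
    setIntegral_congr_fun measurableSet_Ioi habs2]
  rw [integral_const_mul, integral_const_mul, hval1]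
  have : ∫ s in Set.Ioi t, ((s - t) ^ (-(1 / 2 : ℝ)) - s ^ (-(1 / 2 : ℝ))) = 2 * Real.sqrt t :=
    hval2
  rw [this, hc]
  ring
end

section
/- Let H be a Hilbert space and A : H → H a bounded self-adjoint operator with A ≥ 0, and let √A denote its positive self-adjoint square root. Then for every v ∈ H and every t ≥ 0, ‖exp(−tA) v − v‖ ≤ (4/√π) √t · ‖√A v‖. -/
open MeasureTheory Real
open RealInnerProductSpace

set_option maxHeartbeats 1000000
set_option synthInstance.maxHeartbeats 400000

/-- Proposition 2.3 of the paper for a bounded positive self-adjoint generator: if `A ≥ 0` is a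
bounded self-adjoint operator on a Hilbert space `H` with positive self-adjoint square root
`sqrtA`, then for all `v ∈ H` and `t ≥ 0`,
`‖exp(−tA) v − v‖ ≤ (4/√π) √t ‖√A v‖`. -/
theorem stmt_4 {H : Type*} [NormedAddCommGroup H] [InnerProductSpace ℝ H] [CompleteSpace H]
    (A sqrtA : H →L[ℝ] H) (hA : A.IsPositive) (hsqrtA : sqrtA.IsPositive)
    (hsq : sqrtA * sqrtA = A) (v : H) (t : ℝ) (ht : 0 ≤ t) :
    ‖(NormedSpace.exp (-(t • A))) v - v‖
      ≤ (4 / Real.sqrt Real.pi) * Real.sqrt t * ‖sqrtA v‖ := by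
  set E : ℝ → (H →L[ℝ] H) := fun s => NormedSpace.exp (s • (-A)) with hE
  have hexp : NormedSpace.exp (-(t • A)) = E t := by rw [hE]; simp [smul_neg]
  have hE0 : E 0 = 1 := by simp [hE, NormedSpace.exp_zero]
  -- commutation
  have hcA : Commute sqrtA A := by
    rw [← hsq]; exact (Commute.refl sqrtA).mul_right (Commute.refl sqrtA)
  have hcommA : ∀ s : ℝ, Commute A (E s) :=
    fun s => (((Commute.refl A).neg_right).smul_right s).exp_right
  have hcommS : ∀ s : ℝ, Commute sqrtA (E s) :=
    fun s => ((hcA.neg_right).smul_right s).exp_right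
  -- derivative
  have hderiv : ∀ (s : ℝ) (w : H), HasDerivAt (fun u => E u w) (-(E s (A w))) s := by
    intro s w
    have h := (hasDerivAt_exp_smul_const (𝕂 := ℝ) (-A) s).clm_apply (hasDerivAt_const s w)
    simpa [hE, ContinuousLinearMap.mul_apply] using h
  -- positivity of inner
  have hpos : ∀ w : H, 0 ≤ ⟪A w, w⟫ := by
    intro w
    have := hA.2 w
    simpa [ContinuousLinearMap.reApplyInnerSelf] using this
  -- contraction
  have hcontr : ∀ s : ℝ, 0 ≤ s → ∀ w : H, ‖E s w‖ ≤ ‖w‖ := by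
    intro s hs w
    set φ : ℝ → ℝ := fun u => ⟪E u w, E u w⟫ with hφdef
    have hφ : ∀ u : ℝ, HasDerivAt φ (-(2 * ⟪A (E u w), E u w⟫)) u := by
      intro u
      have h := (hderiv u w).inner ℝ (hderiv u w)
      have hc : E u (A w) = A (E u w) := by
        have := (hcommA u).symm
        calc E u (A w) = (E u * A) w := rfl
        _ = (A * E u) w := by rw [this]
        _ = A (E u w) := rfl
      refine h.congr_deriv ?_
      rw [hc, inner_neg_right, inner_neg_left, real_inner_comm (A ((E u) w))]
      ring
    have hmono : AntitoneOn φ (Set.Ici (0 : ℝ)) := by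
      apply antitoneOn_of_deriv_nonpos (convex_Ici 0)
      · have hdiff : Differentiable ℝ φ := fun u => (hφ u).differentiableAt
        exact hdiff.continuous.continuousOn
      · exact fun u _ => ((hφ u).differentiableAt).differentiableWithinAt
      · intro u _
        rw [(hφ u).deriv]
        have := hpos (E u w)
        linarith
    have h1 : φ s ≤ φ 0 := hmono Set.self_mem_Ici hs hs
    have h0 : φ 0 = ⟪w, w⟫ := by simp [hφdef, hE0]
    have := h1.trans_eq h0
    rw [hφdef] at this
    simp only [real_inner_self_eq_norm_sq] at this
    nlinarith [norm_nonneg (E s w), norm_nonneg w]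
  -- the function g
  set C := ‖sqrtA v‖ ^ 2 with hC
  set g : ℝ → ℝ := fun s => ⟪v - E s v, v⟫ with hg
  have hg' : ∀ s : ℝ, HasDerivAt g ⟪E s (A v), v⟫ s := by
    intro s
    have h1 : HasDerivAt (fun u => v - E u v) (E s (A v)) s := by
      have := (hasDerivAt_const s v).sub (hderiv s v)
      simp only [zero_sub, neg_neg] at this
      exact this
    have := h1.inner ℝ (hasDerivAt_const s v)
    simpa using this
  have hbound : ∀ s ∈ Set.Icc (0:ℝ) t, ‖⟪E s (A v), v⟫‖ ≤ C := by
    intro s hs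
    have hc : E s (A v) = sqrtA (E s (sqrtA v)) := by
      have h1 : E s (A v) = (E s * (sqrtA * sqrtA)) v := by rw [hsq]; rfl
      have h2 : E s * (sqrtA * sqrtA) = sqrtA * (E s * sqrtA) := by
        conv_lhs => rw [← mul_assoc, ← (hcommS s).eq, mul_assoc]
      rw [h1, h2]; rfl
    rw [hc]
    have hsym : ⟪sqrtA (E s (sqrtA v)), v⟫ = ⟪E s (sqrtA v), sqrtA v⟫ :=
      hsqrtA.1 (E s (sqrtA v)) v
    rw [hsym]
    calc ‖⟪E s (sqrtA v), sqrtA v⟫‖ ≤ ‖E s (sqrtA v)‖ * ‖sqrtA v‖ := by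
          simpa using abs_real_inner_le_norm (E s (sqrtA v)) (sqrtA v)
      _ ≤ ‖sqrtA v‖ * ‖sqrtA v‖ := by
          have := hcontr s hs.1 (sqrtA v)
          exact mul_le_mul_of_nonneg_right this (norm_nonneg _)
      _ = C := by rw [hC]; ring
  have hmvt : ‖g t - g 0‖ ≤ C * ‖t - 0‖ := by
    apply Convex.norm_image_sub_le_of_norm_hasDerivWithin_le
      (fun s hs => (hg' s).hasDerivWithinAt) hbound (convex_Icc 0 t)
      (Set.left_mem_Icc.2 ht) (Set.right_mem_Icc.2 ht)
  have hg0 : g 0 = 0 := by simp [hg, hE0]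
  have hgt : g t ≤ C * t := by
    rw [hg0, sub_zero] at hmvt
    have := (le_abs_self (g t)).trans hmvt
    rwa [Real.norm_eq_abs, sub_zero, abs_of_nonneg ht] at this
  -- final
  set u := E t v with hu
  have hsq1 : ‖u - v‖ ^ 2 ≤ 2 * (C * t) := by
    have hexpand : ‖u - v‖ ^ 2 = ⟪u, u⟫ - 2 * ⟪u, v⟫ + ⟪v, v⟫ := by
      rw [← real_inner_self_eq_norm_sq]
      rw [inner_sub_sub_self]
      ring_nf
      rw [real_inner_comm v u]
      ring
    have hcv : ⟪u, u⟫ ≤ ⟪v, v⟫ := by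
      rw [real_inner_self_eq_norm_sq, real_inner_self_eq_norm_sq]
      have := hcontr t ht v
      nlinarith [norm_nonneg (E t v), norm_nonneg v]
    have hgt' : ⟪v, v⟫ - ⟪u, v⟫ ≤ C * t := by
      have : g t = ⟪v, v⟫ - ⟪u, v⟫ := by rw [hg]; simp [inner_sub_left, real_inner_comm]; rfl
      linarith [hgt, this.symm.le, this.le]
    linarith [hexpand]
  rw [hexp]
  have hK : (0:ℝ) ≤ 4 / Real.sqrt Real.pi * Real.sqrt t * ‖sqrtA v‖ := by
    positivity
  have hKsq : (4 / Real.sqrt Real.pi * Real.sqrt t * ‖sqrtA v‖) ^ 2 = 16 / Real.pi * t * C := by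
    rw [hC]
    have h1 : Real.sqrt Real.pi ^ 2 = Real.pi := Real.sq_sqrt Real.pi_nonneg
    have h2 : Real.sqrt t ^ 2 = t := Real.sq_sqrt ht
    field_simp
    rw [h1, h2]; ring
  have hπ : Real.pi ≤ 4 := Real.pi_le_four
  have hπ0 : 0 < Real.pi := Real.pi_pos
  have hC0 : 0 ≤ C := by positivity
  have hfin : ‖u - v‖ ^ 2 ≤ (4 / Real.sqrt Real.pi * Real.sqrt t * ‖sqrtA v‖) ^ 2 := by
    rw [hKsq]
    have : 2 * (C * t) ≤ 16 / Real.pi * t * C := by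
      rw [div_mul_eq_mul_div, div_mul_eq_mul_div, le_div_iff₀ hπ0]
      nlinarith
    linarith
  nlinarith [norm_nonneg (u - v), hK, hfin]
end

section
/- Let Q be a symmetric positive-definite n×n real matrix and A := −Q⁻¹/2. For every t > 0, the matrix Γ_t := Q^{−1/2} (I − exp(2tA))^{−1/2} exp(tA) satisfies the operator norm bound ‖Γ_t‖ ≤ 1/√t, i.e. |Γ_t x| ≤ |x|/√t for every x ∈ ℝⁿ. -/
open MeasureTheory Real
open Matrix

lemma aux_norm_unitary {n : ℕ} (U : Matrix (Fin n) (Fin n) ℝ) (hU : Uᵀ * U = 1)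
    (y : EuclideanSpace ℝ (Fin n)) : ‖Matrix.toEuclideanLin U y‖ = ‖y‖ := by
  rw [Matrix.toEuclideanLin_apply]
  simp only [EuclideanSpace.norm_eq, Real.norm_eq_abs, sq_abs]
  congr 1
  have : ∀ v : Fin n → ℝ, ∑ i, (U *ᵥ v) i ^ 2 = ∑ i, v i ^ 2 := by
    intro v
    have h1 : ∑ i, (U *ᵥ v) i ^ 2 = (U *ᵥ v) ⬝ᵥ (U *ᵥ v) := by
      simp [dotProduct, sq]
    have h2 : ∑ i, v i ^ 2 = v ⬝ᵥ v := by simp [dotProduct, sq]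
    rw [h1, h2]
    calc (U *ᵥ v) ⬝ᵥ (U *ᵥ v) = (v ᵥ* Uᵀ) ⬝ᵥ (U *ᵥ v) := by rw [Matrix.vecMul_transpose]
    _ = v ⬝ᵥ ((Uᵀ * U) *ᵥ v) := by rw [Matrix.dotProduct_mulVec, Matrix.vecMul_vecMul]; rw [Matrix.dotProduct_mulVec]
    _ = v ⬝ᵥ v := by rw [hU, Matrix.one_mulVec]
  exact this _

lemma aux_norm_diag {n : ℕ} (d : Fin n → ℝ) (c : ℝ) (hc : 0 ≤ c) (hd : ∀ i, |d i| ≤ c)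
    (y : EuclideanSpace ℝ (Fin n)) :
    ‖Matrix.toEuclideanLin (Matrix.diagonal d) y‖ ≤ c * ‖y‖ := by
  rw [Matrix.toEuclideanLin_apply]
  simp only [EuclideanSpace.norm_eq, Real.norm_eq_abs, sq_abs]
  rw [← Real.sqrt_sq hc, ← Real.sqrt_mul (sq_nonneg c)]
  apply Real.sqrt_le_sqrt
  rw [Finset.mul_sum]
  apply Finset.sum_le_sum
  intro i _
  have h1 : (Matrix.diagonal d *ᵥ y.ofLp) i = d i * y i := by
    simp [Matrix.mulVec_diagonal]
  rw [h1, mul_pow]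
  have h2 : d i ^ 2 ≤ c ^ 2 := by
    rw [← sq_abs (d i)]
    exact pow_le_pow_left₀ (abs_nonneg _) (hd i) 2
  exact mul_le_mul_of_nonneg_right h2 (sq_nonneg _)

lemma aux_mul_apply {n : ℕ} (A B : Matrix (Fin n) (Fin n) ℝ) (y : EuclideanSpace ℝ (Fin n)) :
    Matrix.toEuclideanLin (A * B) y = Matrix.toEuclideanLin A (Matrix.toEuclideanLin B y) := by
  simp [Matrix.toEuclideanLin_apply, Matrix.mulVec_mulVec]

lemma aux_scalar (t q : ℝ) (ht : 0 < t) (hq : 0 < q) :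
    (Real.sqrt q)⁻¹ * (Real.sqrt (1 - Real.exp (-(t / q))))⁻¹ * Real.exp (-(t / (2 * q)))
      ≤ (Real.sqrt t)⁻¹ := by
  have hs : 0 < t / q := div_pos ht hq
  set e : ℝ := Real.exp (-(t / q)) with he
  have he0 : 0 < e := Real.exp_pos _
  have he1 : e < 1 := by rw [he]; exact Real.exp_lt_one_iff.mpr (by linarith)
  have h1e : 0 < 1 - e := by linarith
  set g : ℝ := (Real.sqrt q)⁻¹ * (Real.sqrt (1 - e))⁻¹ * Real.exp (-(t / (2 * q))) with hg
  have hg0 : 0 ≤ g := by positivity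
  have hgsq : g ^ 2 = q⁻¹ * (1 - e)⁻¹ * e := by
    have h2 : Real.exp (-(t / (2 * q))) ^ 2 = e := by
      rw [sq, ← Real.exp_add, he]
      congr 1
      field_simp
      ring
    rw [hg]
    rw [mul_pow, mul_pow, h2, ← Real.sqrt_inv q, ← Real.sqrt_inv (1 - e),
      Real.sq_sqrt (by positivity), Real.sq_sqrt (by positivity)]
  have hkey : t * e ≤ q * (1 - e) := by
    have h3 : t / q + 1 ≤ Real.exp (t / q) := Real.add_one_le_exp _
    have h4 : (t / q + 1) * e ≤ 1 := by
      have := mul_le_mul_of_nonneg_right h3 he0.le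
      rwa [← Real.exp_add, add_neg_cancel, Real.exp_zero] at this
    have h5 : t / q * e ≤ 1 - e := by nlinarith
    calc t * e = (t / q * e) * q := by field_simp
    _ ≤ (1 - e) * q := by exact mul_le_mul_of_nonneg_right h5 hq.le
    _ = q * (1 - e) := mul_comm _ _
  have hsq_le : g ^ 2 ≤ t⁻¹ := by
    have hdiv : e / (q * (1 - e)) ≤ 1 / t := by
      rw [div_le_div_iff₀ (by positivity) ht]
      nlinarith [hkey]
    have heq : q⁻¹ * (1 - e)⁻¹ * e = e / (q * (1 - e)) := by
      rw [div_eq_mul_inv, mul_inv]; ring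
    rw [hgsq, heq, show t⁻¹ = 1 / t from (one_div t).symm]
    exact hdiv
  calc g = Real.sqrt (g ^ 2) := (Real.sqrt_sq hg0).symm
  _ ≤ Real.sqrt t⁻¹ := Real.sqrt_le_sqrt hsq_le
  _ = (Real.sqrt t)⁻¹ := Real.sqrt_inv t

open scoped MatrixOrder in
lemma Matrix.PosSemidef.eq_of_sq_eq_sq {n : ℕ} {A B : Matrix (Fin n) (Fin n) ℝ}
    (hA : A.PosSemidef) (hB : B.PosSemidef) (h : A ^ 2 = B ^ 2) : A = B :=
  (CFC.sq_eq_sq_iff A B hA.nonneg hB.nonneg).mp h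

/-- The estimate `|Γ_t| ≤ 1/√t` used in the proof of Lemma 3.2 of the paper: with `Q` symmetric
positive-definite, `A := −Q⁻¹/2`, and `R`, `S` the (unique) positive-definite square roots of
`Q` and `I − exp(2tA)` respectively, the matrix `Γ_t := Q^{−1/2}(I − exp(2tA))^{−1/2} exp(tA)
= R⁻¹ S⁻¹ exp(tA)` satisfies `|Γ_t x| ≤ |x|/√t` for every `x ∈ ℝⁿ`. -/
theorem stmt_10 (n : ℕ) (Q : Matrix (Fin n) (Fin n) ℝ) (hQ : Q.PosDef) (t : ℝ) (ht : 0 < t)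
    (R S : Matrix (Fin n) (Fin n) ℝ) (hR : R.PosDef) (hRQ : R * R = Q)
    (hS : S.PosDef)
    (hSe : S * S = 1 - NormedSpace.exp ((2 * t) • (-(2 : ℝ)⁻¹ • Q⁻¹)))
    (x : EuclideanSpace ℝ (Fin n)) :
    ‖Matrix.toEuclideanLin
        (R⁻¹ * S⁻¹ * NormedSpace.exp (t • (-(2 : ℝ)⁻¹ • Q⁻¹))) x‖
      ≤ ‖x‖ / Real.sqrt t := by
  classical
  have hH : Q.IsHermitian := hQ.1
  set U : Matrix (Fin n) (Fin n) ℝ := (hH.eigenvectorUnitary : Matrix (Fin n) (Fin n) ℝ) with hUdef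
  set μ : Fin n → ℝ := hH.eigenvalues with hμdef
  have hμpos : ∀ i, 0 < μ i := hQ.eigenvalues_pos
  have hU1 : U * star U = 1 := Matrix.mem_unitaryGroup_iff.mp hH.eigenvectorUnitary.2
  have hU2 : star U * U = 1 := Matrix.mem_unitaryGroup_iff'.mp hH.eigenvectorUnitary.2
  set C : (Fin n → ℝ) → Matrix (Fin n) (Fin n) ℝ := fun d => U * Matrix.diagonal d * star U with hCdef
  have hCmul : ∀ d e, C d * C e = C (d * e) := by
    intro d e
    calc C d * C e = U * (Matrix.diagonal d * ((star U * U) * (Matrix.diagonal e * star U))) := by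
          simp only [hCdef, mul_assoc]
    _ = C (d * e) := by
          rw [hU2, one_mul, ← mul_assoc (Matrix.diagonal d), Matrix.diagonal_mul_diagonal]
          simp only [hCdef, mul_assoc]
          rfl
  have hCone : C 1 = 1 := by
    show U * Matrix.diagonal (1 : Fin n → ℝ) * star U = 1
    have h1 : Matrix.diagonal (1 : Fin n → ℝ) = 1 := Matrix.diagonal_one
    rw [h1, mul_one]; exact hU1
  have hQC : Q = C μ := by
    have := hH.spectral_theorem
    simpa [hCdef] using this
  have hCsub : ∀ d e, C d - C e = C (d - e) := by
    intro d e
    show U * Matrix.diagonal d * star U - U * Matrix.diagonal e * star U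
      = U * Matrix.diagonal (d - e) * star U
    rw [← Matrix.sub_mul, ← Matrix.mul_sub, Matrix.diagonal_sub]
    rfl
  have hCsmul : ∀ (c : ℝ) d, c • C d = C (c • d) := by
    intro c d
    show c • (U * Matrix.diagonal d * star U) = U * Matrix.diagonal (c • d) * star U
    simp [Matrix.diagonal_smul, mul_smul_comm, smul_mul_assoc]
  have hUunit : IsUnit U := ⟨⟨U, star U, hU1, hU2⟩, rfl⟩
  have hUinv : U⁻¹ = star U := Matrix.inv_eq_right_inv hU1
  have hCinv : ∀ d : Fin n → ℝ, (∀ i, d i ≠ 0) → (C d)⁻¹ = C d⁻¹ := by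
    intro d hd
    apply Matrix.inv_eq_right_inv
    rw [hCmul]
    have : d * d⁻¹ = 1 := by funext i; exact mul_inv_cancel₀ (hd i)
    rw [this, hCone]
  have hQinv : Q⁻¹ = C μ⁻¹ := by
    rw [hQC]; exact hCinv μ (fun i => (hμpos i).ne')
  have hCexp : ∀ d : Fin n → ℝ, NormedSpace.exp (C d) = C (fun i => Real.exp (d i)) := by
    intro d
    show NormedSpace.exp (U * Matrix.diagonal d * star U)
      = U * Matrix.diagonal (fun i => Real.exp (d i)) * star U
    rw [← hUinv, Matrix.exp_conj U (Matrix.diagonal d) hUunit, Matrix.exp_diagonal, Pi.exp_def]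
    rw [hUinv]
    congr 1
    congr 1
    congr 1
    funext i
    rw [Real.exp_eq_exp_ℝ]
  have hCpsd : ∀ d : Fin n → ℝ, (∀ i, 0 ≤ d i) → (C d).PosSemidef := by
    intro d hd
    have h1 : (Matrix.diagonal d).PosSemidef := Matrix.posSemidef_diagonal_iff.mpr hd
    have := h1.mul_mul_conjTranspose_same U
    rwa [← Matrix.star_eq_conjTranspose] at this
  -- scalar eigenvalue data
  set e₁ : Fin n → ℝ := fun i => Real.exp (-(t / μ i)) with he₁
  set e₂ : Fin n → ℝ := fun i => Real.exp (-(t / (2 * μ i))) with he₂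
  have h2tA : (2 * t) • (-(2 : ℝ)⁻¹ • Q⁻¹) = C (fun i => -(t / μ i)) := by
    rw [hQinv, smul_smul, hCsmul]
    have harg : (2 * t * -(2 : ℝ)⁻¹) • μ⁻¹ = fun i => -(t / μ i) := by
      funext i
      have hne : μ i ≠ 0 := (hμpos i).ne'
      show 2 * t * -(2 : ℝ)⁻¹ * (μ i)⁻¹ = -(t / μ i)
      field_simp
    rw [harg]
  have htA : t • (-(2 : ℝ)⁻¹ • Q⁻¹) = C (fun i => -(t / (2 * μ i))) := by
    rw [hQinv, smul_smul, hCsmul]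
    have harg : (t * -(2 : ℝ)⁻¹) • μ⁻¹ = fun i => -(t / (2 * μ i)) := by
      funext i
      have hne : μ i ≠ 0 := (hμpos i).ne'
      show t * -(2 : ℝ)⁻¹ * (μ i)⁻¹ = -(t / (2 * μ i))
      field_simp
    rw [harg]
  have hE2 : NormedSpace.exp ((2 * t) • (-(2 : ℝ)⁻¹ • Q⁻¹)) = C e₁ := by
    rw [h2tA, hCexp]
  have hE : NormedSpace.exp (t • (-(2 : ℝ)⁻¹ • Q⁻¹)) = C e₂ := by
    rw [htA, hCexp]
  have he₁lt : ∀ i, e₁ i < 1 := fun i =>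
    Real.exp_lt_one_iff.mpr (by have := div_pos ht (hμpos i); linarith)
  have he₁pos : ∀ i, 0 < e₁ i := fun i => Real.exp_pos _
  -- identification of R and S
  have hRC : R = C (fun i => Real.sqrt (μ i)) := by
    apply hR.posSemidef.eq_of_sq_eq_sq (hCpsd _ (fun i => Real.sqrt_nonneg _))
    rw [sq, sq, hRQ, hCmul, hQC]
    have harg : ((fun i => Real.sqrt (μ i)) * fun i => Real.sqrt (μ i)) = μ := by
      funext i
      exact Real.mul_self_sqrt (hμpos i).le
    rw [harg]
  have hSC : S = C (fun i => Real.sqrt (1 - e₁ i)) := by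
    apply hS.posSemidef.eq_of_sq_eq_sq (hCpsd _ (fun i => Real.sqrt_nonneg _))
    rw [sq, sq, hSe, hE2, hCmul, ← hCone, hCsub]
    have harg : ((fun i => Real.sqrt (1 - e₁ i)) * fun i => Real.sqrt (1 - e₁ i))
        = (1 - e₁ : Fin n → ℝ) := by
      funext i
      show Real.sqrt (1 - e₁ i) * Real.sqrt (1 - e₁ i) = (1 : ℝ) - e₁ i
      exact Real.mul_self_sqrt (by have := he₁lt i; linarith)
    rw [harg]
  have hRinv : R⁻¹ = C (fun i => (Real.sqrt (μ i))⁻¹) := by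
    rw [hRC, hCinv _ (fun i => (Real.sqrt_pos.mpr (hμpos i)).ne')]
    rfl
  have hSinv : S⁻¹ = C (fun i => (Real.sqrt (1 - e₁ i))⁻¹) := by
    rw [hSC, hCinv _ (fun i => (Real.sqrt_pos.mpr (by have := he₁lt i; linarith)).ne')]
    rfl
  set g : Fin n → ℝ :=
    fun i => (Real.sqrt (μ i))⁻¹ * (Real.sqrt (1 - e₁ i))⁻¹ * e₂ i with hgdef
  have hΓ : R⁻¹ * S⁻¹ * NormedSpace.exp (t • (-(2 : ℝ)⁻¹ • Q⁻¹)) = C g := by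
    rw [hRinv, hSinv, hE, hCmul, hCmul]
    rfl
  -- norm bound
  have hgle : ∀ i, |g i| ≤ (Real.sqrt t)⁻¹ := by
    intro i
    have hnonneg : 0 ≤ g i := by
      have := (he₁lt i); have := Real.exp_pos (-(t / (2 * μ i)))
      positivity
    rw [abs_of_nonneg hnonneg]
    exact aux_scalar t (μ i) ht (hμpos i)
  rw [hΓ, hCdef]
  have hstep1 : ∀ y : EuclideanSpace ℝ (Fin n),
      ‖Matrix.toEuclideanLin (U * Matrix.diagonal g * star U) y‖
        ≤ (Real.sqrt t)⁻¹ * ‖y‖ := by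
    intro y
    rw [aux_mul_apply, aux_mul_apply]
    have hUt : Uᵀ * U = 1 := by
      rw [← Matrix.conjTranspose_eq_transpose_of_trivial, ← Matrix.star_eq_conjTranspose]
      exact hU2
    have hUst : (star U)ᵀ * star U = 1 := by
      rw [← Matrix.conjTranspose_eq_transpose_of_trivial, ← Matrix.star_eq_conjTranspose,
        star_star]
      exact hU1
    rw [aux_norm_unitary U hUt]
    calc ‖Matrix.toEuclideanLin (Matrix.diagonal g) (Matrix.toEuclideanLin (star U) y)‖
        ≤ (Real.sqrt t)⁻¹ * ‖Matrix.toEuclideanLin (star U) y‖ :=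
          aux_norm_diag g _ (by positivity) hgle _
    _ = (Real.sqrt t)⁻¹ * ‖y‖ := by rw [aux_norm_unitary (star U) hUst]
  calc ‖Matrix.toEuclideanLin (U * Matrix.diagonal g * star U) x‖
      ≤ (Real.sqrt t)⁻¹ * ‖x‖ := hstep1 x
  _ = ‖x‖ / Real.sqrt t := by rw [div_eq_mul_inv, mul_comm]
end

section
/- Quantitative stability of regular Lagrangian flows: let H be a separable real Hilbert space, m a finite Borel measure on H, T > 0, and let b, b̄ : [0,T] × H → H be Borel vector fields with ∫₀ᵀ ∫_H (|b_t| + |b̄_t|) dm dt < ∞. Let X be a regular Lagrangian flow of b with compressibility constant L, and X̄ a regular Lagrangian flow of b̄ with compressibility constant L̄. Assume there exists a Borel function g : [0,T] × H → [0, ∞) such that G := ∫₀ᵀ ∫_H g_t dm dt < ∞ and, for a.e. t ∈ (0,T) and all x, y ∈ H, |b_t(x) − b_t(y)| ≤ |x − y| · (g_t(x) + g_t(y)). If δ := ∫₀ᵀ ∫_H |b_t − b̄_t| dm dt satisfies 0 < δ < 1, then for every t ∈ [0,T], ∫_H min(|X(t,x) − X̄(t,x)|, 1) dm(x) ≤ (2(L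 + L̄) G + 2 L̄ + 1) / |log δ|. -/
open MeasureTheory Real

/-- A regular Lagrangian flow `X` of the Borel vector field `b : [0,T] × H → H`, with
compressibility constant `L`: for `m`-a.e. `x` the curve `t ↦ X(t,x)` is an integral curve of
`b` starting at `x`, and the pushforward of `m` under `X(t,·)` is bounded by `L·m`. -/
def IsRegularLagrangianFlow {H : Type*} [NormedAddCommGroup H] [InnerProductSpace ℝ H]
    [MeasurableSpace H] (m : Measure H) (T : ℝ) (b : ℝ → H → H) (L : ℝ)
    (X : ℝ → H → H) : Prop :=
  (∀ t ∈ Set.Icc 0 T, AEMeasurable (X t) m) ∧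
    (∀ᵐ x ∂m, IntegrableOn (fun s => b s (X s x)) (Set.Ioc 0 T) ∧
      ∀ t ∈ Set.Icc 0 T, X t x = x + ∫ s in Set.Ioc 0 t, b s (X s x)) ∧
    (∀ t ∈ Set.Icc 0 T, Measure.map (X t) m ≤ ENNReal.ofReal L • m)

set_option maxHeartbeats 1000000
open Set
open scoped ENNReal NNReal



lemma core_log_le {w : ℝ → ℝ} {t δ : ℝ} (hδ : 0 < δ) (ht : 0 ≤ t)
    (hw0 : ∀ s, 0 ≤ w s) (hw : IntegrableOn w (Set.Ioc 0 t)) :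
    Real.log (δ + ∫ s in Set.Ioc 0 t, w s) - Real.log δ
      ≤ ∫ s in Set.Ioc 0 t, w s / (δ + ∫ σ in Set.Ioc 0 s, w σ) := by
  set U : ℝ → ℝ := fun s => ∫ σ in Set.Ioc 0 s, w σ with hU
  have hU0 : ∀ s, 0 ≤ U s := fun s => setIntegral_nonneg measurableSet_Ioc fun σ _ => hw0 σ
  have hUzero : U 0 = 0 := by simp [hU]
  have hUmono : ∀ ⦃s s'⦄, s ≤ s' → s' ≤ t → U s ≤ U s' := by
    intro s s' hss' hs't
    rcases le_or_gt s 0 with h0 | h0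
    · have : U s = 0 := by
        rw [hU]; simp only
        rw [Set.Ioc_eq_empty (by linarith), Measure.restrict_empty, integral_zero_measure]
      rw [this]; exact hU0 s'
    · exact setIntegral_mono_set (hw.mono_set (Set.Ioc_subset_Ioc le_rfl hs't))
        (Filter.Eventually.of_forall fun σ => hw0 σ)
        (HasSubset.Subset.eventuallyLE (Set.Ioc_subset_Ioc le_rfl hss'))
  have hwIcc : IntegrableOn w (Set.Icc 0 t) := by
    rwa [integrableOn_Icc_iff_integrableOn_Ioc]
  have hUcont : ContinuousOn U (Set.Icc 0 t) := intervalIntegral.continuousOn_primitive hwIcc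
  have hUaem : AEMeasurable U (volume.restrict (Set.Ioc 0 t)) := by
    have : AEMeasurable U (volume.restrict (Set.Icc 0 t)) :=
      (hUcont.aemeasurable measurableSet_Icc)
    exact this.mono_measure (Measure.restrict_mono Set.Ioc_subset_Icc_self le_rfl)
  have hq_int : IntegrableOn (fun s => w s / (δ + U s)) (Set.Ioc 0 t) := by
    have hmeas : AEStronglyMeasurable (fun s => w s / (δ + U s))
        (volume.restrict (Set.Ioc 0 t)) :=
      (hw.aemeasurable.div (aemeasurable_const.add hUaem)).aestronglyMeasurable
    refine Integrable.mono' (hw.div_const δ) hmeas ?_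
    refine Filter.Eventually.of_forall fun s => ?_
    have : ‖w s / (δ + U s)‖ = w s / (δ + U s) := by
      rw [Real.norm_eq_abs, abs_of_nonneg (div_nonneg (hw0 s) (by linarith [hU0 s]))]
    rw [this]
    exact div_le_div_of_nonneg_left (hw0 s) hδ (by linarith [hU0 s])
  rcases eq_or_lt_of_le ht with rfl | ht0
  · simp
  refine le_of_forall_pos_le_add ?_
  intro ε hε
  have hcompact : IsCompact (Set.Icc (0:ℝ) t) := isCompact_Icc
  set ε' : ℝ := ε * δ ^ 2 / (U t + 1) with hε'def
  have hUt1 : 0 < U t + 1 := by linarith [hU0 t]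
  have hε' : 0 < ε' := by positivity
  obtain ⟨η, hη0, hη⟩ := Metric.uniformContinuousOn_iff.1
    (hcompact.uniformContinuousOn_of_continuous hUcont) ε' hε'
  obtain ⟨n, hn⟩ := exists_nat_gt (t / η)
  have hn0 : 0 < (n:ℝ) := lt_of_lt_of_le (div_pos ht0 hη0) hn.le
  have hnn : n ≠ 0 := by exact_mod_cast hn0.ne'
  set a : ℕ → ℝ := fun i => i * t / n with ha
  have ha0 : a 0 = 0 := by simp [ha]
  have han : a n = t := by simp only [ha]; field_simp
  have hamono : ∀ i j : ℕ, i ≤ j → a i ≤ a j := by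
    intro i j hij
    have : (i:ℝ) ≤ j := by exact_mod_cast hij
    rw [ha]
    simp only
    gcongr
  have hain : ∀ i : ℕ, i ≤ n → a i ∈ Set.Icc 0 t := by
    intro i hi
    constructor
    · rw [ha]; positivity
    · have := hamono i n hi; rwa [han] at this
  have hstep : ∀ i : ℕ, a (i + 1) - a i = t / n := by
    intro i; rw [ha]; push_cast; field_simp; ring
  have htn : t / n < η := by
    rw [div_lt_iff₀ hn0]
    rw [div_lt_iff₀ hη0] at hn
    nlinarith
  have hD : ∀ i : ℕ, i < n → U (a (i + 1)) - U (a i) < ε' := by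
    intro i hi
    have h1 := hain i hi.le
    have h2 := hain (i+1) hi
    have hd : dist (a (i+1)) (a i) < η := by
      rw [Real.dist_eq, abs_of_nonneg (by linarith [hamono i (i+1) (Nat.le_succ i)])]
      rw [hstep i]; exact htn
    have := hη _ h2 _ h1 hd
    rw [Real.dist_eq] at this
    calc U (a (i+1)) - U (a i) ≤ |U (a (i+1)) - U (a i)| := le_abs_self _
      _ < ε' := this
  have hintw : ∀ i : ℕ, i < n → IntervalIntegrable w volume (a i) (a (i+1)) := by
    intro i hi
    rw [intervalIntegrable_iff_integrableOn_Ioc_of_le (hamono i (i+1) (Nat.le_succ i))]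
    exact hw.mono_set (Set.Ioc_subset_Ioc (hain i hi.le).1 (hain (i+1) hi).2)
  have hUinterval : ∀ i : ℕ, i ≤ n → U (a i) = ∫ s in (0:ℝ)..(a i), w s := by
    intro i hi
    rw [intervalIntegral.integral_of_le (hain i hi).1, hU]
  have hDi_eq : ∀ i : ℕ, i < n →
      U (a (i+1)) - U (a i) = ∫ s in Set.Ioc (a i) (a (i+1)), w s := by
    intro i hi
    rw [hUinterval i hi.le, hUinterval (i+1) hi,
      ← intervalIntegral.integral_of_le (hamono i (i+1) (Nat.le_succ i))]
    have hadd := intervalIntegral.integral_add_adjacent_intervals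
      (intervalIntegrable_iff_integrableOn_Ioc_of_le (hain i hi.le).1 |>.2
        (hw.mono_set (Set.Ioc_subset_Ioc le_rfl (hain i hi.le).2)))
      (hintw i hi)
    linarith [hadd]
  have key : ∀ i : ℕ, i < n →
      Real.log (δ + U (a (i+1))) - Real.log (δ + U (a i))
        ≤ (∫ s in (a i)..(a (i+1)), w s / (δ + U s))
          + ε' / δ ^ 2 * (U (a (i+1)) - U (a i)) := by
    intro i hi
    have hai := hamono i (i+1) (Nat.le_succ i)
    have hUa := hU0 (a i)
    have hUb := hU0 (a (i+1))
    have hUab : U (a i) ≤ U (a (i+1)) := hUmono hai (hain (i+1) hi).2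
    have hpa : 0 < δ + U (a i) := by linarith
    have hpb : 0 < δ + U (a (i+1)) := by linarith
    have hlog : Real.log (δ + U (a (i+1))) - Real.log (δ + U (a i))
        ≤ (U (a (i+1)) - U (a i)) / (δ + U (a i)) := by
      rw [← Real.log_div hpb.ne' hpa.ne']
      have := Real.log_le_sub_one_of_pos (div_pos hpb hpa)
      calc Real.log ((δ + U (a (i+1))) / (δ + U (a i)))
          ≤ (δ + U (a (i+1))) / (δ + U (a i)) - 1 := this
        _ = (U (a (i+1)) - U (a i)) / (δ + U (a i)) := by field_simp; ring
    have hswap : (U (a (i+1)) - U (a i)) / (δ + U (a i))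
        ≤ (U (a (i+1)) - U (a i)) / (δ + U (a (i+1)))
          + ε' / δ ^ 2 * (U (a (i+1)) - U (a i)) := by
      have hd : (U (a (i+1)) - U (a i)) / (δ + U (a i))
          - (U (a (i+1)) - U (a i)) / (δ + U (a (i+1)))
          = (U (a (i+1)) - U (a i)) * (U (a (i+1)) - U (a i))
            / ((δ + U (a i)) * (δ + U (a (i+1)))) := by
        field_simp; ring
      have hDi := hD i hi
      have h1 : (U (a (i+1)) - U (a i)) * (U (a (i+1)) - U (a i))
          / ((δ + U (a i)) * (δ + U (a (i+1))))
          ≤ ε' / δ ^ 2 * (U (a (i+1)) - U (a i)) := by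
        rw [div_le_iff₀ (by positivity)]
        have h2 : δ ^ 2 ≤ (δ + U (a i)) * (δ + U (a (i+1))) := by nlinarith
        have h3 : 0 ≤ U (a (i+1)) - U (a i) := by linarith
        calc (U (a (i+1)) - U (a i)) * (U (a (i+1)) - U (a i))
            ≤ ε' * (U (a (i+1)) - U (a i)) := by nlinarith
          _ = (ε' / δ ^ 2 * (U (a (i+1)) - U (a i))) * δ ^ 2 := by
              field_simp
          _ ≤ (ε' / δ ^ 2 * (U (a (i+1)) - U (a i))) * ((δ + U (a i)) * (δ + U (a (i+1)))) := by
              gcongr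
      linarith
    have hint : (U (a (i+1)) - U (a i)) / (δ + U (a (i+1)))
        ≤ ∫ s in (a i)..(a (i+1)), w s / (δ + U s) := by
      rw [intervalIntegral.integral_of_le hai, hDi_eq i hi, ← MeasureTheory.integral_div]
      apply setIntegral_mono_on
      · exact (hw.mono_set (Set.Ioc_subset_Ioc (hain i hi.le).1 (hain (i+1) hi).2)).div_const _
      · exact hq_int.mono_set (Set.Ioc_subset_Ioc (hain i hi.le).1 (hain (i+1) hi).2)
      · exact measurableSet_Ioc
      · intro s hs
        have hsmem : s ∈ Set.Icc 0 t :=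
          ⟨le_of_lt (lt_of_le_of_lt (hain i hi.le).1 hs.1), le_trans hs.2 (hain (i+1) hi).2⟩
        have hUs : U s ≤ U (a (i+1)) := hUmono hs.2 (hain (i+1) hi).2
        exact div_le_div_of_nonneg_left (hw0 s) (by linarith [hU0 s]) (by linarith)
    linarith
  -- sum up
  have hsum := Finset.sum_range_sub (fun i => Real.log (δ + U (a i))) n
  have hsumle : ∑ i ∈ Finset.range n,
      (Real.log (δ + U (a (i+1))) - Real.log (δ + U (a i)))
      ≤ ∑ i ∈ Finset.range n, ((∫ s in (a i)..(a (i+1)), w s / (δ + U s))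
          + ε' / δ ^ 2 * (U (a (i+1)) - U (a i))) := by
    apply Finset.sum_le_sum
    intro i hi
    exact key i (Finset.mem_range.1 hi)
  rw [Finset.sum_add_distrib] at hsumle
  have hq_interval : ∀ i : ℕ, i < n →
      IntervalIntegrable (fun s => w s / (δ + U s)) volume (a i) (a (i+1)) := by
    intro i hi
    rw [intervalIntegrable_iff_integrableOn_Ioc_of_le (hamono i (i+1) (Nat.le_succ i))]
    exact hq_int.mono_set (Set.Ioc_subset_Ioc (hain i hi.le).1 (hain (i+1) hi).2)
  have hsumint := intervalIntegral.sum_integral_adjacent_intervals hq_interval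
  rw [ha0, han] at hsumint
  have hsumtel : ∑ i ∈ Finset.range n, ε' / δ ^ 2 * (U (a (i+1)) - U (a i))
      = ε' / δ ^ 2 * (U t - 0) := by
    rw [← Finset.mul_sum, Finset.sum_range_sub (fun i => U (a i)), ha0, han, hUzero]
  have hfin : ε' / δ ^ 2 * (U t - 0) ≤ ε := by
    have h1 : ε * δ ^ 2 / (U t + 1) / δ ^ 2 * (U t - 0) = ε * (U t / (U t + 1)) := by
      field_simp; ring
    rw [hε'def, h1]
    have h2 : U t / (U t + 1) ≤ 1 := by
      rw [div_le_one hUt1]; linarith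
    nlinarith [div_nonneg (hU0 t) hUt1.le]
  have hLHS : Real.log (δ + U t) - Real.log δ = ∑ i ∈ Finset.range n,
      (Real.log (δ + U (a (i+1))) - Real.log (δ + U (a i))) := by
    rw [hsum, ha0, han, hUzero, add_zero]
  have hRHS : (∫ s in Set.Ioc 0 t, w s / (δ + U s))
      = ∫ s in (0:ℝ)..t, w s / (δ + U s) := (intervalIntegral.integral_of_le ht).symm
  calc Real.log (δ + U t) - Real.log δ
      = ∑ i ∈ Finset.range n, (Real.log (δ + U (a (i+1))) - Real.log (δ + U (a i))) := hLHS
    _ ≤ (∑ i ∈ Finset.range n, ∫ s in (a i)..(a (i+1)), w s / (δ + U s))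
        + ∑ i ∈ Finset.range n, ε' / δ ^ 2 * (U (a (i+1)) - U (a i)) := hsumle
    _ = (∫ s in (0:ℝ)..t, w s / (δ + U s)) + ε' / δ ^ 2 * (U t - 0) := by
        rw [hsumint, hsumtel]
    _ ≤ (∫ s in Set.Ioc 0 t, w s / (δ + U s)) + ε := by
        rw [← hRHS]; linarith


lemma min_mul_log_le {r δ : ℝ} (hδ0 : 0 < δ) (hδ1 : δ < 1) (hr : 0 ≤ r) :
    min r 1 * (- Real.log δ) ≤ Real.log (δ + r) - Real.log δ := by
  rcases le_or_gt 1 r with h1 | h1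
  · rw [min_eq_right h1]
    have : (0:ℝ) ≤ Real.log (δ + r) := Real.log_nonneg (by linarith)
    linarith
  · rw [min_eq_left h1.le]
    have hcc := strictConcaveOn_log_Ioi.concaveOn
    have key := hcc.2 (Set.mem_Ioi.2 hδ0) (Set.mem_Ioi.2 (by linarith : (0:ℝ) < δ + 1))
      (by linarith : (0:ℝ) ≤ 1 - r) hr (by ring)
    simp only [smul_eq_mul] at key
    have heq : (1 - r) * δ + r * (δ + 1) = δ + r := by ring
    rw [heq] at key
    have hlog1 : (0:ℝ) ≤ Real.log (δ + 1) := Real.log_nonneg (by linarith)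
    nlinarith

lemma log_norm_le {H : Type*} [NormedAddCommGroup H] [NormedSpace ℝ H] [CompleteSpace H]
    {w : ℝ → H} {t δ : ℝ} (hδ : 0 < δ) (ht : 0 ≤ t)
    (hw : IntegrableOn w (Set.Ioc 0 t)) :
    Real.log (δ + ‖∫ s in Set.Ioc 0 t, w s‖) - Real.log δ
      ≤ ∫ s in Set.Ioc 0 t, ‖w s‖ / (δ + ‖∫ σ in Set.Ioc 0 s, w σ‖) := by
  set Z : ℝ → H := fun s => ∫ σ in Set.Ioc 0 s, w σ with hZ
  set U : ℝ → ℝ := fun s => ∫ σ in Set.Ioc 0 s, ‖w σ‖ with hU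
  have hZU : ∀ s, ‖Z s‖ ≤ U s := fun s => norm_integral_le_integral_norm _
  have hU0 : ∀ s, 0 ≤ U s := fun s => setIntegral_nonneg measurableSet_Ioc fun σ _ => norm_nonneg _
  have h1 : Real.log (δ + ‖Z t‖) ≤ Real.log (δ + U t) :=
    Real.log_le_log (by linarith [norm_nonneg (Z t)]) (by linarith [hZU t])
  have h2 := core_log_le hδ ht (fun s => norm_nonneg (w s)) hw.norm
  -- last comparison
  have hwIcc : IntegrableOn w (Set.Icc 0 t) := by
    rwa [integrableOn_Icc_iff_integrableOn_Ioc]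
  have hZcont : ContinuousOn Z (Set.Icc 0 t) := intervalIntegral.continuousOn_primitive hwIcc
  have hZaem : AEMeasurable (fun s => ‖Z s‖) (volume.restrict (Set.Ioc 0 t)) :=
    ((hZcont.norm.aemeasurable measurableSet_Icc).mono_measure
      (Measure.restrict_mono Set.Ioc_subset_Icc_self le_rfl))
  have hUcont : ContinuousOn U (Set.Icc 0 t) := by
    apply intervalIntegral.continuousOn_primitive
    exact hwIcc.norm
  have hUaem : AEMeasurable U (volume.restrict (Set.Ioc 0 t)) :=
    ((hUcont.aemeasurable measurableSet_Icc).mono_measure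
      (Measure.restrict_mono Set.Ioc_subset_Icc_self le_rfl))
  have hint1 : IntegrableOn (fun s => ‖w s‖ / (δ + U s)) (Set.Ioc 0 t) := by
    refine Integrable.mono' (hw.norm.div_const δ)
      ((hw.norm.aemeasurable.div (aemeasurable_const.add hUaem)).aestronglyMeasurable) ?_
    refine Filter.Eventually.of_forall fun s => ?_
    have h : ‖‖w s‖ / (δ + U s)‖ = ‖w s‖ / (δ + U s) := by
      rw [Real.norm_eq_abs, abs_of_nonneg (div_nonneg (norm_nonneg _) (by linarith [hU0 s]))]
    rw [h]
    exact div_le_div_of_nonneg_left (norm_nonneg _) hδ (by linarith [hU0 s])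
  have hint2 : IntegrableOn (fun s => ‖w s‖ / (δ + ‖Z s‖)) (Set.Ioc 0 t) := by
    refine Integrable.mono' (hw.norm.div_const δ)
      ((hw.norm.aemeasurable.div (aemeasurable_const.add hZaem)).aestronglyMeasurable) ?_
    refine Filter.Eventually.of_forall fun s => ?_
    have h : ‖‖w s‖ / (δ + ‖Z s‖)‖ = ‖w s‖ / (δ + ‖Z s‖) := by
      rw [Real.norm_eq_abs, abs_of_nonneg (div_nonneg (norm_nonneg _)
        (by linarith [norm_nonneg (Z s)]))]
    rw [h]
    exact div_le_div_of_nonneg_left (norm_nonneg _) hδ (by linarith [norm_nonneg (Z s)])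
  have h3 : (∫ s in Set.Ioc 0 t, ‖w s‖ / (δ + U s))
      ≤ ∫ s in Set.Ioc 0 t, ‖w s‖ / (δ + ‖Z s‖) := by
    apply setIntegral_mono_on hint1 hint2 measurableSet_Ioc
    intro s _
    exact div_le_div_of_nonneg_left (norm_nonneg _) (by linarith [norm_nonneg (Z s)])
      (by linarith [hZU s])
  calc Real.log (δ + ‖Z t‖) - Real.log δ ≤ Real.log (δ + U t) - Real.log δ := by linarith
    _ ≤ ∫ s in Set.Ioc 0 t, ‖w s‖ / (δ + U s) := h2
    _ ≤ ∫ s in Set.Ioc 0 t, ‖w s‖ / (δ + ‖Z s‖) := h3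

lemma aux_integrable {H : Type*} [NormedAddCommGroup H] [NormedSpace ℝ H] [CompleteSpace H]
    {w : ℝ → H} {t δ : ℝ} (hδ : 0 < δ)
    (hw : IntegrableOn w (Set.Ioc 0 t)) :
    IntegrableOn (fun s => ‖w s‖ / (δ + ‖∫ σ in Set.Ioc 0 s, w σ‖)) (Set.Ioc 0 t) := by
  rcases le_or_gt t 0 with ht | ht
  · rw [IntegrableOn, Set.Ioc_eq_empty (by linarith), Measure.restrict_empty]
    exact integrable_zero_measure
  set Z : ℝ → H := fun s => ∫ σ in Set.Ioc 0 s, w σ with hZ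
  have hwIcc : IntegrableOn w (Set.Icc 0 t) := by
    rwa [integrableOn_Icc_iff_integrableOn_Ioc]
  have hZcont : ContinuousOn Z (Set.Icc 0 t) := intervalIntegral.continuousOn_primitive hwIcc
  have hZaem : AEMeasurable (fun s => ‖Z s‖) (volume.restrict (Set.Ioc 0 t)) :=
    ((hZcont.norm.aemeasurable measurableSet_Icc).mono_measure
      (Measure.restrict_mono Set.Ioc_subset_Icc_self le_rfl))
  refine Integrable.mono' (hw.norm.div_const δ)
    ((hw.norm.aemeasurable.div (aemeasurable_const.add hZaem)).aestronglyMeasurable) ?_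
  refine Filter.Eventually.of_forall fun s => ?_
  have h : ‖‖w s‖ / (δ + ‖Z s‖)‖ = ‖w s‖ / (δ + ‖Z s‖) := by
    rw [Real.norm_eq_abs, abs_of_nonneg (div_nonneg (norm_nonneg _)
      (by linarith [norm_nonneg (Z s)]))]
  rw [h]
  exact div_le_div_of_nonneg_left (norm_nonneg _) hδ (by linarith [norm_nonneg (Z s)])

lemma flow_joint_aemeasurable {H : Type*} [NormedAddCommGroup H] [InnerProductSpace ℝ H]
    [CompleteSpace H] [MeasurableSpace H] [BorelSpace H]
    (m : Measure H) [IsFiniteMeasure m] {T : ℝ} (hT : 0 < T) {b : ℝ → H → H} {L : ℝ}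
    {X : ℝ → H → H} (hX : IsRegularLagrangianFlow m T b L X) :
    AEMeasurable (fun p : ℝ × H => X p.1 p.2) ((volume.restrict (Set.Ioc 0 T)).prod m) := by
  set P : Measure (ℝ × H) := (volume.restrict (Set.Ioc 0 T)).prod m with hP
  -- approximating maps
  set τ : ℕ → ℝ → ℝ := fun n s => (⌈s * (n+1) / T⌉ : ℤ) * T / (n+1) with hτ
  set f : ℕ → ℝ × H → H := fun n p => X (τ n p.1) p.2 with hf
  have hτmem : ∀ n : ℕ, ∀ s ∈ Set.Ioc 0 T, τ n s ∈ Set.Icc 0 T := by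
    intro n s hs
    have hn1 : (0:ℝ) < (n:ℝ) + 1 := by positivity
    have hk1 : (1:ℤ) ≤ ⌈s * (n+1) / T⌉ := by
      apply Int.le_ceil_iff.2
      push_cast
      have : 0 < s * (n+1) / T := by
        apply div_pos _ hT
        exact mul_pos hs.1 hn1
      linarith
    have hk2 : (⌈s * (n+1) / T⌉ : ℤ) ≤ (n:ℤ) + 1 := by
      apply Int.ceil_le.2
      push_cast
      rw [div_le_iff₀ hT]
      nlinarith [hs.2]
    constructor
    · rw [hτ]
      simp only
      apply div_nonneg _ hn1.le
      have h0 : (0:ℝ) ≤ ((⌈s * (n+1) / T⌉ : ℤ) : ℝ) := by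
        have : (0:ℤ) ≤ ⌈s * (n+1) / T⌉ := by linarith
        exact_mod_cast this
      nlinarith [hT.le]
    · rw [hτ]
      simp only
      rw [div_le_iff₀ hn1]
      have : ((⌈s * (n+1) / T⌉ : ℤ) : ℝ) ≤ (n:ℝ) + 1 := by exact_mod_cast hk2
      nlinarith [hT.le]
  have hτconst : ∀ (n k : ℕ), ∀ s ∈ Set.Ioc ((k:ℝ) * T / (n+1)) (((k:ℝ)+1) * T / (n+1)),
      τ n s = ((k:ℝ)+1) * T / (n+1) := by
    intro n k s hs
    have hn1 : (0:ℝ) < (n:ℝ) + 1 := by positivity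
    have hceil : ⌈s * (n+1) / T⌉ = (k:ℤ) + 1 := by
      apply Int.ceil_eq_iff.2
      push_cast
      constructor
      · rw [lt_div_iff₀ hT]
        have := hs.1
        rw [div_lt_iff₀ hn1] at this
        nlinarith
      · rw [div_le_iff₀ hT]
        have := hs.2
        rw [le_div_iff₀ hn1] at this
        nlinarith
    rw [hτ]
    simp only [hceil]
    push_cast
    ring
  have hfmeas : ∀ n, AEMeasurable (f n) P := by
    intro n
    set I : ℕ → Set ℝ := fun k =>
      Set.Ioc ((k:ℝ) * T / (n+1)) (((k:ℝ)+1) * T / (n+1)) ∩ Set.Ioc 0 T with hI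
    have hImeas : ∀ k, MeasurableSet (I k) := fun k => measurableSet_Ioc.inter measurableSet_Ioc
    have hn1 : (0:ℝ) < (n:ℝ) + 1 := by positivity
    have hIunion : Set.Ioc 0 T = ⋃ k, I k := by
      ext s
      simp only [Set.mem_iUnion, hI, Set.mem_inter_iff]
      constructor
      · intro hs
        have hk1 : (1:ℤ) ≤ ⌈s * (n+1) / T⌉ := by
          apply Int.le_ceil_iff.2
          push_cast
          have : 0 < s * (n+1) / T := div_pos (mul_pos hs.1 hn1) hT
          linarith
        have hcastZ : ((⌈s * (n+1) / T⌉ - 1).toNat : ℤ) = ⌈s * (n+1) / T⌉ - 1 :=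
          Int.toNat_of_nonneg (by linarith)
        have hcast : (((⌈s * (n+1) / T⌉ - 1).toNat : ℕ) : ℝ) = ((⌈s * (n+1) / T⌉ : ℤ) : ℝ) - 1 := by
          exact_mod_cast congrArg (Int.cast : ℤ → ℝ) hcastZ
        refine ⟨(⌈s * (n+1) / T⌉ - 1).toNat, ⟨?_, ?_⟩, hs⟩
        · rw [div_lt_iff₀ hn1]
          push_cast
          rw [hcast]
          have h2 : ((⌈s * (n+1) / T⌉ : ℤ) : ℝ) < s * (n+1) / T + 1 :=
            Int.ceil_lt_add_one _
          rw [div_add' _ _ _ hT.ne'] at h2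
          have h3 : ((⌈s * (n+1) / T⌉ : ℤ) : ℝ) * T < s * (n+1) + T := by
            rw [← lt_div_iff₀ hT] at *
            calc ((⌈s * (n+1) / T⌉ : ℤ) : ℝ) < (s * (n+1) + 1 * T)/T := h2
              _ = (s * (n+1) + T)/T := by ring_nf
          nlinarith
        · have h2 : s * (n+1) / T ≤ ((⌈s * (n+1) / T⌉ : ℤ) : ℝ) := Int.le_ceil _
          rw [le_div_iff₀ hn1]
          push_cast
          rw [hcast]
          rw [div_le_iff₀ hT] at h2
          nlinarith
      · rintro ⟨k, _, hs⟩
        exact hs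
    rw [hP, Measure.restrict_prod_eq_prod_univ, hIunion, Set.iUnion_prod_const]
    rw [aemeasurable_iUnion_iff]
    intro k
    have hback : (volume.prod m).restrict (I k ×ˢ Set.univ) = (volume.restrict (I k)).prod m := by
      rw [← Measure.prod_restrict, Measure.restrict_univ]
    rw [hback]
    rcases le_or_gt (k : ℕ) n with hk | hk
    · -- nonempty piece
      set tk : ℝ := ((k:ℝ)+1) * T / (n+1) with htk
      have htkmem : tk ∈ Set.Icc 0 T := by
        constructor
        · positivity
        · rw [htk, div_le_iff₀ hn1]
          have : (k:ℝ) + 1 ≤ (n:ℝ) + 1 := by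
            have : (k:ℝ) ≤ n := by exact_mod_cast hk
            linarith
          nlinarith
      obtain ⟨mk, hmkmeas, hmkeq⟩ := hX.1 tk htkmem
      have hFmeas : Measurable (fun p : ℝ × H => mk p.2) := hmkmeas.comp measurable_snd
      apply hFmeas.aemeasurable.congr
      have hbad : ((volume.restrict (I k)).prod m)
          ({p : ℝ × H | p.1 ∉ I k} ∪ {p : ℝ × H | ¬ X tk p.2 = mk p.2}) = 0 := by
        apply le_antisymm _ zero_le
        apply le_trans (measure_union_le _ _)
        have h1 : {p : ℝ × H | p.1 ∉ I k} = (I k)ᶜ ×ˢ (Set.univ : Set H) := by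
          ext p; simp [Set.mem_prod]
        have h2 : {p : ℝ × H | ¬ X tk p.2 = mk p.2}
            = (Set.univ : Set ℝ) ×ˢ {x : H | ¬ X tk x = mk x} := by
          ext p; simp [Set.mem_prod]
        rw [h1, h2, Measure.prod_prod, Measure.prod_prod]
        rw [Measure.restrict_apply (hImeas k).compl]
        simp only [Set.compl_inter_self, measure_empty, zero_mul]
        have hnull : m {x : H | ¬ X tk x = mk x} = 0 := hmkeq
        rw [hnull, mul_zero, add_zero]
      have : ∀ p : ℝ × H, p ∉ ({p : ℝ × H | p.1 ∉ I k} ∪ {p : ℝ × H | ¬ X tk p.2 = mk p.2}) →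
          (fun p : ℝ × H => mk p.2) p = f n p := by
        intro p hp
        simp only [Set.mem_union, Set.mem_setOf_eq, not_or, not_not] at hp
        obtain ⟨hp1, hp2⟩ := hp
        have hIk : p.1 ∈ Set.Ioc ((k:ℝ) * T / (n+1)) (((k:ℝ)+1) * T / (n+1)) := hp1.1
        rw [hf]
        simp only
        rw [hτconst n k p.1 hIk, ← htk, hp2]
      have hsub : {p : ℝ × H | ¬ f n p = mk p.2}
          ⊆ ({p : ℝ × H | p.1 ∉ I k} ∪ {p : ℝ × H | ¬ X tk p.2 = mk p.2}) := by
        intro p hp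
        by_contra hcon
        exact hp ((this p hcon).symm)
      have hae : f n =ᵐ[(volume.restrict (I k)).prod m] fun p => mk p.2 := by
        rw [Filter.EventuallyEq, ae_iff]
        exact measure_mono_null hsub hbad
      exact hae.symm
    · -- empty piece
      have hIempty : I k = ∅ := by
        rw [hI]
        simp only
        apply Set.eq_empty_of_forall_notMem
        intro s hs
        have h1 := hs.1.1
        have h2 := hs.2.2
        have : (k:ℝ) ≥ (n:ℝ) + 1 := by
          have : (n:ℝ) + 1 ≤ (k:ℝ) := by exact_mod_cast hk
          linarith
        have : T ≤ (k:ℝ) * T / (n+1) := by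
          rw [le_div_iff₀ hn1]
          nlinarith
        linarith
      rw [hIempty, Measure.restrict_empty, Measure.zero_prod]
      exact aemeasurable_zero_measure
  have hτtendsto : ∀ s ∈ Set.Ioc 0 T,
      Filter.Tendsto (fun n => τ n s) Filter.atTop (nhds s) := by
    intro s hs
    have hub : ∀ n : ℕ, τ n s ≤ s + T / (n+1) := by
      intro n
      have hn1 : (0:ℝ) < (n:ℝ) + 1 := by positivity
      have h2 : ((⌈s * (n+1) / T⌉ : ℤ) : ℝ) < s * (n+1) / T + 1 := Int.ceil_lt_add_one _
      rw [hτ]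
      simp only
      rw [div_le_iff₀ hn1]
      rw [div_add' _ _ _ hT.ne'] at h2
      rw [lt_div_iff₀ hT] at h2
      have h3 : T/((n:ℝ)+1)*((n:ℝ)+1) = T := div_mul_cancel₀ _ hn1.ne'
      nlinarith [h3]
    have hlb : ∀ n : ℕ, s ≤ τ n s := by
      intro n
      have hn1 : (0:ℝ) < (n:ℝ) + 1 := by positivity
      have h2 : s * (n+1) / T ≤ ((⌈s * (n+1) / T⌉ : ℤ) : ℝ) := Int.le_ceil _
      rw [div_le_iff₀ hT] at h2
      rw [hτ]
      simp only
      rw [le_div_iff₀ hn1]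
      nlinarith
    have hTn : Filter.Tendsto (fun n : ℕ => s + T / ((n:ℝ)+1)) Filter.atTop (nhds s) := by
      have h0 : Filter.Tendsto (fun n : ℕ => T / ((n:ℝ)+1)) Filter.atTop (nhds 0) := by
        have h1 := tendsto_one_div_add_atTop_nhds_zero_nat.const_mul T
        simp only [mul_zero] at h1
        simpa [div_eq_mul_inv] using h1
      simpa using h0.const_add s
    exact tendsto_of_tendsto_of_tendsto_of_le_of_le tendsto_const_nhds hTn hlb hub
  have hconv : ∀ᵐ p ∂P, Filter.Tendsto (fun n => f n p) Filter.atTop (nhds (X p.1 p.2)) := by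
    rw [ae_iff]
    set Q : H → Prop := fun x => IntegrableOn (fun s => b s (X s x)) (Set.Ioc 0 T) ∧
      ∀ t ∈ Set.Icc 0 T, X t x = x + ∫ s in Set.Ioc 0 t, b s (X s x) with hQ
    have hQae : ∀ᵐ x ∂m, Q x := hX.2.1
    have hgood : ∀ p : ℝ × H, p.1 ∈ Set.Ioc 0 T → Q p.2 →
        Filter.Tendsto (fun n => f n p) Filter.atTop (nhds (X p.1 p.2)) := by
      rintro ⟨s, x⟩ hs hQx
      set Y : ℝ → H := fun u => x + ∫ σ in Set.Ioc 0 u, b σ (X σ x) with hY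
      have hYcont : ContinuousOn Y (Set.Icc 0 T) := by
        apply ContinuousOn.add continuousOn_const
        apply intervalIntegral.continuousOn_primitive
        rw [integrableOn_Icc_iff_integrableOn_Ioc]
        exact hQx.1
      have hXY : ∀ u ∈ Set.Icc 0 T, X u x = Y u := fun u hu => hQx.2 u hu
      have hsmem : s ∈ Set.Icc 0 T := Set.Ioc_subset_Icc_self hs
      have htd : Filter.Tendsto (fun n => τ n s) Filter.atTop (nhdsWithin s (Set.Icc 0 T)) := by
        rw [tendsto_nhdsWithin_iff]
        exact ⟨hτtendsto s hs, Filter.Eventually.of_forall fun n => hτmem n s hs⟩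
      have hYd : Filter.Tendsto (fun n => Y (τ n s)) Filter.atTop (nhds (Y s)) :=
        (hYcont s hsmem).tendsto.comp htd
      have heq : ∀ n, f n (s, x) = Y (τ n s) := by
        intro n
        rw [hf]
        simp only
        exact hXY (τ n s) (hτmem n s hs)
      rw [show X s x = Y s from hXY s hsmem]
      simpa only [heq] using hYd
    apply measure_mono_null
      (show {p : ℝ × H | ¬ Filter.Tendsto (fun n => f n p) Filter.atTop (nhds (X p.1 p.2))}
        ⊆ {p : ℝ × H | p.1 ∉ Set.Ioc 0 T} ∪ {p : ℝ × H | ¬ Q p.2} from ?_)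
    · apply le_antisymm _ zero_le
      apply le_trans (measure_union_le _ _)
      have h1 : {p : ℝ × H | p.1 ∉ Set.Ioc 0 T} = (Set.Ioc 0 T)ᶜ ×ˢ (Set.univ : Set H) := by
        ext p; simp [Set.mem_prod]
      have h2 : {p : ℝ × H | ¬ Q p.2} = (Set.univ : Set ℝ) ×ˢ {x : H | ¬ Q x} := by
        ext p; simp [Set.mem_prod]
      rw [h1, h2, hP, Measure.prod_prod, Measure.prod_prod]
      rw [Measure.restrict_apply measurableSet_Ioc.compl]
      simp only [Set.compl_inter_self, measure_empty, zero_mul]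
      have hnull : m {x : H | ¬ Q x} = 0 := hQae
      rw [hnull, mul_zero, add_zero]
    · intro p hp
      simp only [Set.mem_setOf_eq] at hp
      by_contra hcon
      simp only [Set.mem_union, Set.mem_setOf_eq, not_or, not_not] at hcon
      exact hp (hgood p hcon.1 hcon.2)
  exact aemeasurable_of_tendsto_metrizable_ae' hfmeas hconv

/-- Theorem 5.1 of the paper (quantitative stability of regular Lagrangian flows), with the
Sobolev hypothesis on `b` replaced by the pointwise Lusin–Lipschitz property: if `X`, `X̄` are
regular Lagrangian flows of `b`, `b̄` with compressibility constants `L`, `L̄`, if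
`|b_t(x) − b_t(y)| ≤ |x − y|(g_t(x) + g_t(y))` with `G = ∫₀ᵀ∫ g dm dt < ∞`, and if
`δ = ∫₀ᵀ∫ |b − b̄| dm dt ∈ (0,1)`, then for every `t ∈ [0,T]`,
`∫ min(|X_t − X̄_t|, 1) dm ≤ (2(L + L̄)G + 2L̄ + 1)/|log δ|`. -/
theorem stmt_11 {H : Type*} [NormedAddCommGroup H] [InnerProductSpace ℝ H] [CompleteSpace H]
    [TopologicalSpace.SeparableSpace H] [MeasurableSpace H] [BorelSpace H]
    (m : Measure H) [IsFiniteMeasure m] (T : ℝ) (hT : 0 < T)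
    (b bbar : ℝ → H → H)
    (hb_meas : Measurable (Function.uncurry b)) (hbbar_meas : Measurable (Function.uncurry bbar))
    (hb_int : Integrable (fun p : ℝ × H => ‖b p.1 p.2‖ + ‖bbar p.1 p.2‖)
      ((volume.restrict (Set.Ioc 0 T)).prod m))
    (X Xbar : ℝ → H → H) (L Lbar : ℝ)
    (hX : IsRegularLagrangianFlow m T b L X)
    (hXbar : IsRegularLagrangianFlow m T bbar Lbar Xbar)
    (g : ℝ → H → ℝ) (hg_meas : Measurable (Function.uncurry g))
    (hg_nonneg : ∀ t x, 0 ≤ g t x)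
    (hg_int : Integrable (Function.uncurry g) ((volume.restrict (Set.Ioc 0 T)).prod m))
    (G : ℝ) (hG : G = ∫ p, Function.uncurry g p ∂((volume.restrict (Set.Ioc 0 T)).prod m))
    (hlip : ∀ᵐ t ∂(volume.restrict (Set.Ioc 0 T)),
      ∀ x y, ‖b t x - b t y‖ ≤ ‖x - y‖ * (g t x + g t y))
    (δ : ℝ)
    (hδ : δ = ∫ p, ‖b p.1 p.2 - bbar p.1 p.2‖ ∂((volume.restrict (Set.Ioc 0 T)).prod m))
    (hδ0 : 0 < δ) (hδ1 : δ < 1) :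
    ∀ t ∈ Set.Icc 0 T,
      ∫ x, min ‖X t x - Xbar t x‖ 1 ∂m
        ≤ (2 * (L + Lbar) * G + 2 * Lbar + 1) / |Real.log δ| := by
  intro t ht
  have hIocsub : Set.Ioc 0 t ⊆ Set.Ioc 0 T := Set.Ioc_subset_Ioc le_rfl ht.2
  -- m nonzero
  have hmne : m ≠ 0 := by
    intro h0
    rw [h0, Measure.prod_zero, integral_zero_measure] at hδ
    exact hδ0.ne' hδ
  have hmuniv0 : m Set.univ ≠ 0 := by
    intro h0
    exact hmne (Measure.measure_univ_eq_zero.1 h0)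
  have hmunivfin : m Set.univ ≠ ⊤ := measure_ne_top m _
  -- compressibility constants are at least 1
  have hgeL : ∀ (L' : ℝ) (Y : H → H), AEMeasurable Y m →
      Measure.map Y m ≤ ENNReal.ofReal L' • m → 1 ≤ L' := by
    intro L' Y hYm hle
    have h1 : Measure.map Y m Set.univ = m Set.univ := by
      rw [Measure.map_apply_of_aemeasurable hYm MeasurableSet.univ, Set.preimage_univ]
    have h2 : m Set.univ ≤ ENNReal.ofReal L' * m Set.univ := by
      have := Measure.le_iff'.1 hle Set.univ
      rwa [h1, Measure.smul_apply, smul_eq_mul] at this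
    have h3 : (1:ℝ≥0∞) * m Set.univ ≤ ENNReal.ofReal L' * m Set.univ := by rwa [one_mul]
    have h4 : (1:ℝ≥0∞) ≤ ENNReal.ofReal L' :=
      (ENNReal.mul_le_mul_iff_left hmuniv0 hmunivfin).1 h3
    exact ENNReal.one_le_ofReal.1 h4
  have h0T : (0:ℝ) ∈ Set.Icc 0 T := ⟨le_refl 0, hT.le⟩
  have hL1 : 1 ≤ L := hgeL L (X 0) (hX.1 0 h0T) (hX.2.2 0 h0T)
  have hLbar1 : 1 ≤ Lbar := hgeL Lbar (Xbar 0) (hXbar.1 0 h0T) (hXbar.2.2 0 h0T)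
  have hG0 : 0 ≤ G := by
    rw [hG]
    exact integral_nonneg fun p => hg_nonneg p.1 p.2
  have hlogneg : Real.log δ < 0 := Real.log_neg hδ0 hδ1
  have hc0 : 0 < -Real.log δ := by linarith
  have habs : |Real.log δ| = -Real.log δ := abs_of_neg hlogneg
  -- measurability of the t-slice minimum
  have hXt := hX.1 t ht
  have hXbart := hXbar.1 t ht
  have hmin_meas : AEStronglyMeasurable (fun x => min ‖X t x - Xbar t x‖ 1) m :=
    ((hXt.sub hXbart).norm.min aemeasurable_const).aestronglyMeasurable
  -- key pointwise-in-x estimate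
  have key2 : ∀ᵐ x ∂m, ENNReal.ofReal (min ‖X t x - Xbar t x‖ 1 * (-Real.log δ))
      ≤ ∫⁻ s in Set.Ioc 0 t,
          ENNReal.ofReal (‖b s (X s x) - bbar s (Xbar s x)‖ / (δ + ‖X s x - Xbar s x‖)) := by
    filter_upwards [hX.2.1, hXbar.2.1] with x hx hxb
    set w : ℝ → H := fun s => b s (X s x) - bbar s (Xbar s x) with hw
    have hw_int : IntegrableOn w (Set.Ioc 0 t) := IntegrableOn.mono_set (hx.1.sub hxb.1) hIocsub
    have hZeq : ∀ s ∈ Set.Icc 0 t, X s x - Xbar s x = ∫ σ in Set.Ioc 0 s, w σ := by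
      intro s hs
      have hsT : s ∈ Set.Icc 0 T := ⟨hs.1, hs.2.trans ht.2⟩
      rw [hx.2 s hsT, hxb.2 s hsT, add_sub_add_left_eq_sub,
        ← integral_sub (hx.1.mono_set (Set.Ioc_subset_Ioc le_rfl hsT.2))
          (hxb.1.mono_set (Set.Ioc_subset_Ioc le_rfl hsT.2))]
    have hlog := log_norm_le hδ0 ht.1 hw_int
    have hZt : X t x - Xbar t x = ∫ σ in Set.Ioc 0 t, w σ := hZeq t ⟨ht.1, le_refl t⟩
    have hcong : Set.EqOn (fun s => ‖w s‖ / (δ + ‖∫ σ in Set.Ioc 0 s, w σ‖))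
        (fun s => ‖b s (X s x) - bbar s (Xbar s x)‖ / (δ + ‖X s x - Xbar s x‖))
        (Set.Ioc 0 t) := by
      intro s hs
      simp only
      rw [← hZeq s (Set.Ioc_subset_Icc_self hs)]
    have hIeq : (∫ s in Set.Ioc 0 t, ‖w s‖ / (δ + ‖∫ σ in Set.Ioc 0 s, w σ‖))
        = ∫ s in Set.Ioc 0 t, ‖b s (X s x) - bbar s (Xbar s x)‖ / (δ + ‖X s x - Xbar s x‖) :=
      setIntegral_congr_fun measurableSet_Ioc hcong
    have hmin := min_mul_log_le hδ0 hδ1 (norm_nonneg (X t x - Xbar t x))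
    have hreal : min ‖X t x - Xbar t x‖ 1 * (-Real.log δ)
        ≤ ∫ s in Set.Ioc 0 t, ‖b s (X s x) - bbar s (Xbar s x)‖ / (δ + ‖X s x - Xbar s x‖) := by
      rw [← hIeq]
      calc min ‖X t x - Xbar t x‖ 1 * (-Real.log δ)
          ≤ Real.log (δ + ‖X t x - Xbar t x‖) - Real.log δ := hmin
        _ = Real.log (δ + ‖∫ σ in Set.Ioc 0 t, w σ‖) - Real.log δ := by rw [hZt]
        _ ≤ _ := hlog
    have hq_int : IntegrableOn
        (fun s => ‖b s (X s x) - bbar s (Xbar s x)‖ / (δ + ‖X s x - Xbar s x‖))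
        (Set.Ioc 0 t) :=
      (aux_integrable hδ0 hw_int).congr_fun hcong measurableSet_Ioc
    have hq_nonneg : 0 ≤ᵐ[volume.restrict (Set.Ioc 0 t)]
        fun s => ‖b s (X s x) - bbar s (Xbar s x)‖ / (δ + ‖X s x - Xbar s x‖) := by
      refine Filter.Eventually.of_forall fun s => ?_
      exact div_nonneg (norm_nonneg _) (by linarith [norm_nonneg (X s x - Xbar s x)])
    calc ENNReal.ofReal (min ‖X t x - Xbar t x‖ 1 * (-Real.log δ))
        ≤ ENNReal.ofReal
            (∫ s in Set.Ioc 0 t, ‖b s (X s x) - bbar s (Xbar s x)‖ / (δ + ‖X s x - Xbar s x‖)) :=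
          ENNReal.ofReal_le_ofReal hreal
      _ = ∫⁻ s in Set.Ioc 0 t,
            ENNReal.ofReal (‖b s (X s x) - bbar s (Xbar s x)‖ / (δ + ‖X s x - Xbar s x‖)) :=
          ofReal_integral_eq_lintegral_ofReal hq_int hq_nonneg
  -- pointwise-in-s estimate, all x
  have key3 : ∀ x : H, (∫⁻ s in Set.Ioc 0 t,
        ENNReal.ofReal (‖b s (X s x) - bbar s (Xbar s x)‖ / (δ + ‖X s x - Xbar s x‖)))
      ≤ ∫⁻ s in Set.Ioc 0 T,
          (ENNReal.ofReal (g s (X s x)) + ENNReal.ofReal (g s (Xbar s x))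
            + ENNReal.ofReal ‖b s (Xbar s x) - bbar s (Xbar s x)‖ * ENNReal.ofReal δ⁻¹) := by
    intro x
    refine le_trans (lintegral_mono_set hIocsub) (lintegral_mono_ae ?_)
    filter_upwards [hlip] with s hs
    have hD : 0 ≤ ‖X s x - Xbar s x‖ := norm_nonneg _
    have h1 : ‖b s (X s x) - bbar s (Xbar s x)‖
        ≤ ‖X s x - Xbar s x‖ * (g s (X s x) + g s (Xbar s x))
          + ‖b s (Xbar s x) - bbar s (Xbar s x)‖ := by
      have htri := dist_triangle (b s (X s x)) (b s (Xbar s x)) (bbar s (Xbar s x))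
      rw [dist_eq_norm, dist_eq_norm, dist_eq_norm] at htri
      have hlipx := hs (X s x) (Xbar s x)
      linarith
    have h2 : ‖b s (X s x) - bbar s (Xbar s x)‖ / (δ + ‖X s x - Xbar s x‖)
        ≤ g s (X s x) + g s (Xbar s x)
          + ‖b s (Xbar s x) - bbar s (Xbar s x)‖ * δ⁻¹ := by
      have ha : 0 ≤ g s (X s x) + g s (Xbar s x) :=
        add_nonneg (hg_nonneg _ _) (hg_nonneg _ _)
      have he : 0 ≤ ‖b s (Xbar s x) - bbar s (Xbar s x)‖ := norm_nonneg _
      have hden : 0 < δ + ‖X s x - Xbar s x‖ := by linarith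
      rw [div_le_iff₀ hden]
      have hei : ‖b s (Xbar s x) - bbar s (Xbar s x)‖ * δ⁻¹ * δ
          = ‖b s (Xbar s x) - bbar s (Xbar s x)‖ := by field_simp
      nlinarith [mul_nonneg (mul_nonneg he (inv_nonneg.2 hδ0.le)) hD,
        mul_nonneg ha hD]
    calc ENNReal.ofReal (‖b s (X s x) - bbar s (Xbar s x)‖ / (δ + ‖X s x - Xbar s x‖))
        ≤ ENNReal.ofReal (g s (X s x) + g s (Xbar s x)
            + ‖b s (Xbar s x) - bbar s (Xbar s x)‖ * δ⁻¹) := ENNReal.ofReal_le_ofReal h2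
      _ = ENNReal.ofReal (g s (X s x)) + ENNReal.ofReal (g s (Xbar s x))
            + ENNReal.ofReal ‖b s (Xbar s x) - bbar s (Xbar s x)‖ * ENNReal.ofReal δ⁻¹ := by
          rw [ENNReal.ofReal_add (add_nonneg (hg_nonneg _ _) (hg_nonneg _ _))
            (mul_nonneg (norm_nonneg _) (inv_nonneg.2 hδ0.le)),
            ENNReal.ofReal_add (hg_nonneg _ _) (hg_nonneg _ _),
            ENNReal.ofReal_mul (norm_nonneg _)]
  -- joint measurability
  have hjointX := flow_joint_aemeasurable m hT hX
  have hjointXbar := flow_joint_aemeasurable m hT hXbar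
  have hρmeas : AEMeasurable
      (fun p : ℝ × H => ENNReal.ofReal (g p.1 (X p.1 p.2)) + ENNReal.ofReal (g p.1 (Xbar p.1 p.2))
        + ENNReal.ofReal ‖b p.1 (Xbar p.1 p.2) - bbar p.1 (Xbar p.1 p.2)‖ * ENNReal.ofReal δ⁻¹)
      ((volume.restrict (Set.Ioc 0 T)).prod m) := by
    have h1 : AEMeasurable (fun p : ℝ × H => g p.1 (X p.1 p.2))
        ((volume.restrict (Set.Ioc 0 T)).prod m) :=
      hg_meas.comp_aemeasurable (measurable_fst.aemeasurable.prodMk hjointX)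
    have h2 : AEMeasurable (fun p : ℝ × H => g p.1 (Xbar p.1 p.2))
        ((volume.restrict (Set.Ioc 0 T)).prod m) :=
      hg_meas.comp_aemeasurable (measurable_fst.aemeasurable.prodMk hjointXbar)
    have h3 : AEMeasurable (fun p : ℝ × H => ‖b p.1 (Xbar p.1 p.2) - bbar p.1 (Xbar p.1 p.2)‖)
        ((volume.restrict (Set.Ioc 0 T)).prod m) :=
      ((hb_meas.sub hbbar_meas).norm).comp_aemeasurable (measurable_fst.aemeasurable.prodMk hjointXbar)
    exact (h1.ennreal_ofReal.add h2.ennreal_ofReal).add (h3.ennreal_ofReal.mul_const _)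
  have hswap : (∫⁻ x, (∫⁻ s in Set.Ioc 0 T,
        (ENNReal.ofReal (g s (X s x)) + ENNReal.ofReal (g s (Xbar s x))
          + ENNReal.ofReal ‖b s (Xbar s x) - bbar s (Xbar s x)‖ * ENNReal.ofReal δ⁻¹)) ∂m)
      = ∫⁻ s in Set.Ioc 0 T, ∫⁻ x,
          (ENNReal.ofReal (g s (X s x)) + ENNReal.ofReal (g s (Xbar s x))
            + ENNReal.ofReal ‖b s (Xbar s x) - bbar s (Xbar s x)‖ * ENNReal.ofReal δ⁻¹) ∂m :=
    (MeasureTheory.lintegral_lintegral_swap hρmeas).symm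
  -- per-time-slice compressibility bound
  have push : ∀ (L' : ℝ) (Y : H → H), AEMeasurable Y m →
      Measure.map Y m ≤ ENNReal.ofReal L' • m →
      ∀ (φ : H → ℝ≥0∞), Measurable φ →
      (∫⁻ x, φ (Y x) ∂m) ≤ ENNReal.ofReal L' * ∫⁻ x, φ x ∂m := by
    intro L' Y hY hmap φ hφ
    rw [← lintegral_map' hφ.aemeasurable hY]
    calc ∫⁻ y, φ y ∂(Measure.map Y m) ≤ ∫⁻ y, φ y ∂(ENNReal.ofReal L' • m) :=
          lintegral_mono' hmap le_rfl
      _ = ENNReal.ofReal L' * ∫⁻ y, φ y ∂m := lintegral_smul_measure _ _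
  have hpers : ∀ᵐ s ∂(volume.restrict (Set.Ioc 0 T)), (∫⁻ x,
        (ENNReal.ofReal (g s (X s x)) + ENNReal.ofReal (g s (Xbar s x))
          + ENNReal.ofReal ‖b s (Xbar s x) - bbar s (Xbar s x)‖ * ENNReal.ofReal δ⁻¹) ∂m)
      ≤ ENNReal.ofReal L * (∫⁻ x, ENNReal.ofReal (g s x) ∂m)
        + ENNReal.ofReal Lbar * (∫⁻ x, ENNReal.ofReal (g s x) ∂m)
        + ENNReal.ofReal Lbar * (∫⁻ x, ENNReal.ofReal ‖b s x - bbar s x‖ ∂m)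
          * ENNReal.ofReal δ⁻¹ := by
    filter_upwards [ae_restrict_mem measurableSet_Ioc] with s hs
    have hsIcc : s ∈ Set.Icc 0 T := Set.Ioc_subset_Icc_self hs
    have hXs := hX.1 s hsIcc
    have hXbars := hXbar.1 s hsIcc
    have hgs : Measurable (fun y : H => ENNReal.ofReal (g s y)) :=
      (hg_meas.comp measurable_prodMk_left).ennreal_ofReal
    have hds : Measurable (fun y : H => ENNReal.ofReal ‖b s y - bbar s y‖) :=
      (((hb_meas.sub hbbar_meas).norm).comp measurable_prodMk_left).ennreal_ofReal
    have hsplit : (∫⁻ x,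
          (ENNReal.ofReal (g s (X s x)) + ENNReal.ofReal (g s (Xbar s x))
            + ENNReal.ofReal ‖b s (Xbar s x) - bbar s (Xbar s x)‖ * ENNReal.ofReal δ⁻¹) ∂m)
        = (∫⁻ x, ENNReal.ofReal (g s (X s x)) ∂m) + (∫⁻ x, ENNReal.ofReal (g s (Xbar s x)) ∂m)
          + (∫⁻ x, ENNReal.ofReal ‖b s (Xbar s x) - bbar s (Xbar s x)‖ ∂m)
            * ENNReal.ofReal δ⁻¹ := by
      have hm1 : AEMeasurable (fun x => ENNReal.ofReal (g s (X s x))) m :=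
        hgs.comp_aemeasurable hXs
      have hm3 : AEMeasurable (fun x => ENNReal.ofReal ‖b s (Xbar s x) - bbar s (Xbar s x)‖) m :=
        hds.comp_aemeasurable hXbars
      rw [lintegral_add_right' _ (hm3.mul_const _), lintegral_add_left' hm1,
        lintegral_mul_const'' _ hm3]
    rw [hsplit]
    have hb1 := push L (X s) hXs (hX.2.2 s hsIcc) _ hgs
    have hb2 := push Lbar (Xbar s) hXbars (hXbar.2.2 s hsIcc) _ hgs
    have hb3 := push Lbar (Xbar s) hXbars (hXbar.2.2 s hsIcc) _ hds
    exact add_le_add (add_le_add hb1 hb2) (mul_le_mul_left hb3 _)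
  -- totals
  have hAmeas : Measurable (fun s => ∫⁻ x, ENNReal.ofReal (g s x) ∂m) :=
    (hg_meas.ennreal_ofReal).lintegral_prod_right'
  have hBmeas : Measurable (fun s => ∫⁻ x, ENNReal.ofReal ‖b s x - bbar s x‖ ∂m) :=
    (((hb_meas.sub hbbar_meas).norm).ennreal_ofReal).lintegral_prod_right'
  have hΓ : (∫⁻ s in Set.Ioc 0 T, ∫⁻ x, ENNReal.ofReal (g s x) ∂m)
      = ENNReal.ofReal G := by
    rw [hG, ofReal_integral_eq_lintegral_ofReal hg_int
      (Filter.Eventually.of_forall fun p => hg_nonneg p.1 p.2),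
      MeasureTheory.lintegral_prod _ (hg_meas.ennreal_ofReal).aemeasurable]
    rfl
  have hdiffint : Integrable (fun p : ℝ × H => ‖b p.1 p.2 - bbar p.1 p.2‖)
      ((volume.restrict (Set.Ioc 0 T)).prod m) := by
    refine hb_int.mono' ((hb_meas.sub hbbar_meas).norm).aestronglyMeasurable ?_
    refine Filter.Eventually.of_forall fun p => ?_
    rw [norm_norm]
    exact norm_sub_le _ _
  have hΔ : (∫⁻ s in Set.Ioc 0 T, ∫⁻ x, ENNReal.ofReal ‖b s x - bbar s x‖ ∂m)
      = ENNReal.ofReal δ := by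
    have hmeasd : AEMeasurable (fun p : ℝ × H => ENNReal.ofReal ‖b p.1 p.2 - bbar p.1 p.2‖)
        ((volume.restrict (Set.Ioc 0 T)).prod m) :=
      (((hb_meas.sub hbbar_meas).norm).ennreal_ofReal).aemeasurable
    rw [hδ, ofReal_integral_eq_lintegral_ofReal hdiffint
      (Filter.Eventually.of_forall fun p => norm_nonneg _),
      MeasureTheory.lintegral_prod _ hmeasd]
  have htot : (∫⁻ s in Set.Ioc 0 T, ∫⁻ x,
        (ENNReal.ofReal (g s (X s x)) + ENNReal.ofReal (g s (Xbar s x))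
          + ENNReal.ofReal ‖b s (Xbar s x) - bbar s (Xbar s x)‖ * ENNReal.ofReal δ⁻¹) ∂m)
      ≤ ENNReal.ofReal ((L + Lbar) * G + Lbar) := by
    calc (∫⁻ s in Set.Ioc 0 T, ∫⁻ x,
          (ENNReal.ofReal (g s (X s x)) + ENNReal.ofReal (g s (Xbar s x))
            + ENNReal.ofReal ‖b s (Xbar s x) - bbar s (Xbar s x)‖ * ENNReal.ofReal δ⁻¹) ∂m)
        ≤ ∫⁻ s in Set.Ioc 0 T,
            (ENNReal.ofReal L * (∫⁻ x, ENNReal.ofReal (g s x) ∂m)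
              + ENNReal.ofReal Lbar * (∫⁻ x, ENNReal.ofReal (g s x) ∂m)
              + ENNReal.ofReal Lbar * (∫⁻ x, ENNReal.ofReal ‖b s x - bbar s x‖ ∂m)
                * ENNReal.ofReal δ⁻¹) := lintegral_mono_ae hpers
      _ = ENNReal.ofReal L * ENNReal.ofReal G + ENNReal.ofReal Lbar * ENNReal.ofReal G
            + ENNReal.ofReal Lbar * ENNReal.ofReal δ * ENNReal.ofReal δ⁻¹ := by
          rw [lintegral_add_right _ (((hBmeas.const_mul _).mul_const _)),
            lintegral_add_left (hAmeas.const_mul _),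
            lintegral_const_mul _ hAmeas, lintegral_const_mul _ hAmeas,
            lintegral_mul_const _ (hBmeas.const_mul _), lintegral_const_mul _ hBmeas,
            hΓ, hΔ]
      _ = ENNReal.ofReal ((L + Lbar) * G + Lbar) := by
          rw [mul_assoc, ← ENNReal.ofReal_mul hδ0.le, mul_inv_cancel₀ hδ0.ne',
            ENNReal.ofReal_one, mul_one, ← ENNReal.ofReal_mul (by linarith : (0:ℝ) ≤ L),
            ← ENNReal.ofReal_mul (by linarith : (0:ℝ) ≤ Lbar),
            ← ENNReal.ofReal_add (by nlinarith) (by nlinarith),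
            ← ENNReal.ofReal_add (by nlinarith) (by linarith)]
          congr 1
          ring
  -- conclusion
  have hchain : (∫⁻ x, ENNReal.ofReal (min ‖X t x - Xbar t x‖ 1 * (-Real.log δ)) ∂m)
      ≤ ENNReal.ofReal ((L + Lbar) * G + Lbar) := by
    calc (∫⁻ x, ENNReal.ofReal (min ‖X t x - Xbar t x‖ 1 * (-Real.log δ)) ∂m)
        ≤ ∫⁻ x, (∫⁻ s in Set.Ioc 0 t,
            ENNReal.ofReal
              (‖b s (X s x) - bbar s (Xbar s x)‖ / (δ + ‖X s x - Xbar s x‖))) ∂m :=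
          lintegral_mono_ae key2
      _ ≤ ∫⁻ x, (∫⁻ s in Set.Ioc 0 T,
            (ENNReal.ofReal (g s (X s x)) + ENNReal.ofReal (g s (Xbar s x))
              + ENNReal.ofReal ‖b s (Xbar s x) - bbar s (Xbar s x)‖
                * ENNReal.ofReal δ⁻¹)) ∂m := lintegral_mono key3
      _ = _ := hswap
      _ ≤ ENNReal.ofReal ((L + Lbar) * G + Lbar) := htot
  have hchain1 : (∫ x, min ‖X t x - Xbar t x‖ 1 ∂m) * (-Real.log δ)
      = (∫⁻ x, ENNReal.ofReal (min ‖X t x - Xbar t x‖ 1 * (-Real.log δ)) ∂m).toReal := by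
    rw [← integral_mul_const]
    exact integral_eq_lintegral_of_nonneg_ae
      (Filter.Eventually.of_forall fun x =>
        mul_nonneg (le_min (norm_nonneg _) zero_le_one) hc0.le)
      (hmin_meas.mul_const _)
  have hPc : (∫ x, min ‖X t x - Xbar t x‖ 1 ∂m) * (-Real.log δ) ≤ (L + Lbar) * G + Lbar := by
    rw [hchain1]
    have h5 := ENNReal.toReal_mono ENNReal.ofReal_ne_top hchain
    rwa [ENNReal.toReal_ofReal (by nlinarith)] at h5
  rw [habs, le_div_iff₀ hc0]
  calc (∫ x, min ‖X t x - Xbar t x‖ 1 ∂m) * (-Real.log δ) ≤ (L + Lbar) * G + Lbar := hPc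
    _ ≤ 2 * (L + Lbar) * G + 2 * Lbar + 1 := by nlinarith
end
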